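/- arXiv:1512.08122 — 4 statements merged into one kernel-verified Lean document; each statement's English description precedes it below -/
import Mathlib

section
/- Suppose the initial point w⁰ = (x⁰, y⁰, λ⁰) satisfies −Σ_{i=1}^N B_iᵀ λ_i⁰ ∈ ∂g(y⁰), and for every i = 1,…,N and k ≥ 0 the step size satisfies c_i^k ≤ (L_i + γ_i‖A_i‖² + 𝟙{δ_i^k ≠ 0}(1+√k))⁻¹, where ‖A_i‖ is the spectral norm. Let {(x^k, y^k, λ^k)} be generated by SPG-ADMM. Then for every k ≥ 0, every λ = (λ_1,…,λ_N) with λ_i ∈ ℝ^{m_i}, and every (x*, y*, λ*) ∈ χ*: F(x*,y*) − F(x^{k+1},y^{k+1}) + Σ_i ⟨λ_i, b_i − A_i x_i^{k+1} − B_i y^{k+1}⟩ + (1/2) Σ_i [ (1/c_i^k)(‖x_i* − x_i^k‖²_{Q_i^k} − ‖x_i* − x_i^{k+1}‖²_{Q_i^k}) + γ_i(‖B_i(y^k − y*)‖² − ‖B_i(y^{k+1} − y*)‖²) + (1/γ_i)(‖λ_i − λ_i^k‖² − ‖λ_i − λ_i^{k+1}‖²) + 2⟨x_i* − x_i^k,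 δ_i^k⟩ + ‖δ_i^k‖²/(1+√k) ] ≥ (1/2) Σ_i [ ‖x_i^{k+1} − x_i^k‖²_{Q̄_i^k} + γ_i‖B_i(y^{k+1} − y^k)‖² + (1/γ_i)‖λ_i^{k+1} − λ_i^k‖² ], where Q_i^k = I − γ_i c_i^k A_iᵀA_i, Q̄_i^k = (1/c_i^k)Q_i^k − (L_i + 𝟙{δ_i^k ≠ 0}(1+√k)) I, and ‖v‖²_Q = vᵀQv. -/
open Finset Matrix MeasureTheory Filter
open scoped RealInnerProductSpace Classical

/-- Matrix–vector multiplication between Euclidean spaces. -/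
noncomputable def mvec {m n : Type*} [Fintype m] [Fintype n]
    (A : Matrix m n ℝ) (v : EuclideanSpace ℝ n) : EuclideanSpace ℝ m :=
  WithLp.toLp 2 (A.mulVec v)

/-- The `Q`-quadratic form `‖v‖²_Q = vᵀ Q v`. -/
noncomputable def qnorm {d : Type*} [Fintype d] (Q : Matrix d d ℝ)
    (v : EuclideanSpace ℝ d) : ℝ :=
  ⟪v, mvec Q v⟫

/-- Spectral norm of a matrix. -/
noncomputable def spec {m n : Type*} [Fintype m] [Fintype n] [DecidableEq n]
    (A : Matrix m n ℝ) : ℝ :=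
  ‖LinearMap.toContinuousLinearMap (Matrix.toEuclideanLin A)‖

open scoped Topology

section Helpers

lemma mvec_apply {m n : Type*} [Fintype m] [Fintype n] (A : Matrix m n ℝ) (v : EuclideanSpace ℝ n)
    (i : m) : mvec A v i = ∑ j, A i j * v j := rfl
lemma mvec_add {m n : Type*} [Fintype m] [Fintype n] (A : Matrix m n ℝ) (u v : EuclideanSpace ℝ n) :
    mvec A (u + v) = mvec A u + mvec A v := by
  ext i; simp [mvec_apply, mul_add, Finset.sum_add_distrib]
lemma mvec_sub {m n : Type*} [Fintype m] [Fintype n] (A : Matrix m n ℝ) (u v : EuclideanSpace ℝ n) :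
    mvec A (u - v) = mvec A u - mvec A v := by
  ext i; simp [mvec_apply, mul_sub, Finset.sum_sub_distrib]
lemma mvec_smul {m n : Type*} [Fintype m] [Fintype n] (A : Matrix m n ℝ) (r : ℝ) (v : EuclideanSpace ℝ n) :
    mvec A (r • v) = r • mvec A v := by
  ext i; simp [mvec_apply, Finset.mul_sum]; congr 1; ext j; ring
lemma mvec_one {n : Type*} [Fintype n] [DecidableEq n] (v : EuclideanSpace ℝ n) :
    mvec (1 : Matrix n n ℝ) v = v := by
  ext i; simp [mvec_apply, Matrix.one_apply]
lemma mvec_smulmat {m n : Type*} [Fintype m] [Fintype n] (A : Matrix m n ℝ) (r : ℝ) (v : EuclideanSpace ℝ n) :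
    mvec (r • A) v = r • mvec A v := by
  ext i; simp [mvec_apply, Finset.mul_sum]; congr 1; ext j; ring
lemma mvec_submat {m n : Type*} [Fintype m] [Fintype n] (A A' : Matrix m n ℝ) (v : EuclideanSpace ℝ n) :
    mvec (A - A') v = mvec A v - mvec A' v := by
  ext i; simp [mvec_apply, sub_mul, Finset.sum_sub_distrib]
lemma mvec_mul {m n p : Type*} [Fintype m] [Fintype n] [Fintype p] (A : Matrix m n ℝ)
    (C : Matrix n p ℝ) (v : EuclideanSpace ℝ p) :
    mvec (A * C) v = mvec A (mvec C v) := by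
  show (WithLp.toLp 2 ((A * C).mulVec v.ofLp) : EuclideanSpace ℝ m) = WithLp.toLp 2 (A.mulVec (C.mulVec v.ofLp))
  rw [← Matrix.mulVec_mulVec]
lemma inner_mvec_transpose {m n : Type*} [Fintype m] [Fintype n] (A : Matrix m n ℝ)
    (u : EuclideanSpace ℝ m) (v : EuclideanSpace ℝ n) :
    ⟪mvec Aᵀ u, v⟫ = ⟪u, mvec A v⟫ := by
  simp only [mvec_apply, PiLp.inner_apply, RCLike.inner_apply, conj_trivial]
  simp only [Finset.sum_mul, Finset.mul_sum]
  rw [Finset.sum_comm]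
  congr 1; ext j; congr 1; ext i; rw [Matrix.transpose_apply]; ring

lemma mvec_transpose_inner {m n : Type*} [Fintype m] [Fintype n] (A : Matrix m n ℝ)
    (u : EuclideanSpace ℝ m) (v : EuclideanSpace ℝ n) :
    ⟪v, mvec Aᵀ u⟫ = ⟪mvec A v, u⟫ := by
  rw [real_inner_comm, inner_mvec_transpose, real_inner_comm]

lemma qnorm_Q {mm nn : Type*} [Fintype mm] [Fintype nn] [DecidableEq nn]
    (A : Matrix mm nn ℝ) (s : ℝ) (w : EuclideanSpace ℝ nn) :
    qnorm (1 - s • (Aᵀ * A)) w = ‖w‖^2 - s * ‖mvec A w‖^2 := by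
  rw [qnorm, mvec_submat, mvec_one, mvec_smulmat, mvec_mul, inner_sub_right,
    real_inner_smul_right, mvec_transpose_inner, real_inner_self_eq_norm_sq,
    real_inner_self_eq_norm_sq]

lemma qnorm_smul_sub_one {nn : Type*} [Fintype nn] [DecidableEq nn]
    (Q : Matrix nn nn ℝ) (a r : ℝ) (w : EuclideanSpace ℝ nn) :
    qnorm (a • Q - r • 1) w = a * qnorm Q w - r * ‖w‖^2 := by
  rw [qnorm, qnorm, mvec_submat, mvec_smulmat, mvec_smulmat, mvec_one, inner_sub_right,
    real_inner_smul_right, real_inner_smul_right, real_inner_self_eq_norm_sq]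

lemma mvec_neg {m n : Type*} [Fintype m] [Fintype n] (A : Matrix m n ℝ) (v : EuclideanSpace ℝ n) :
    mvec A (-v) = -(mvec A v) := by
  ext i; simp [mvec_apply, Finset.sum_neg_distrib]

lemma young_delta {nn : Type*} [Fintype nn] (δv e : EuclideanSpace ℝ nn) {σ sk : ℝ}
    (hsk : 0 < sk) (hσ : σ = sk ∨ (σ = 0 ∧ δv = 0)) :
    -(σ * ‖e‖^2)/2 - ‖δv‖^2 / sk / 2 ≤ ⟪δv, e⟫ := by
  rcases hσ with h | ⟨h1, h2⟩
  · subst h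
    have h1 : -(‖δv‖ * ‖e‖) ≤ ⟪δv, e⟫ := by
      have := abs_real_inner_le_norm δv e
      have := neg_abs_le (⟪δv, e⟫)
      nlinarith
    have hd : ‖δv‖^2 = σ * (‖δv‖^2 / σ) := by field_simp
    nlinarith [sq_nonneg (σ * ‖e‖ - ‖δv‖), hsk, sq_nonneg (‖δv‖ - σ*‖e‖),
      mul_pos hsk hsk, div_nonneg (sq_nonneg ‖δv‖) hsk.le]
  · subst h1; subst h2
    simp

lemma per_i {nn mm ny : ℕ}
    (A : Matrix (Fin mm) (Fin nn) ℝ) (B : Matrix (Fin mm) (Fin ny) ℝ)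
    (b : EuclideanSpace ℝ (Fin mm))
    (c γ L σ sk : ℝ) (hc : 0 < c) (hγ : 0 < γ) (hsk : 0 < sk)
    (xk xp xs δv : EuclideanSpace ℝ (Fin nn))
    (yk yp ys : EuclideanSpace ℝ (Fin ny))
    (lk lp l : EuclideanSpace ℝ (Fin mm))
    (Gi : ℝ)
    (hσ : σ = sk ∨ (σ = 0 ∧ δv = 0))
    (hfeas : mvec A xs + mvec B ys - b = 0)
    (hlam : lp = lk + γ • (mvec A xp + mvec B yp - b))
    (hG : c⁻¹ * ⟪xk - xp, xs - xp⟫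
        - ⟪δv + mvec Aᵀ (lk + γ • (mvec A xk + mvec B yk - b)), xs - xp⟫
        - L/2 * ‖xp - xk‖^2 ≤ Gi) :
    (1/2) * (qnorm (c⁻¹ • (1 - (γ*c) • (Aᵀ*A)) - (L+σ) • 1) (xp - xk)
      + γ * ‖mvec B (yp - yk)‖^2 + γ⁻¹ * ‖lp - lk‖^2)
    ≤ Gi + ⟪lp, mvec B (yp - ys)⟫ + ⟪l, b - mvec A xp - mvec B yp⟫
      + (1/2) * (c⁻¹ * qnorm (1 - (γ*c) • (Aᵀ*A)) (xs - xk)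
         - c⁻¹ * qnorm (1 - (γ*c) • (Aᵀ*A)) (xs - xp)
         + γ * ‖mvec B (yk - ys)‖^2 - γ * ‖mvec B (yp - ys)‖^2
         + γ⁻¹ * ‖l - lk‖^2 - γ⁻¹ * ‖l - lp‖^2
         + 2 * ⟪xs - xk, δv⟫ + ‖δv‖^2 / sk)
      - ⟪lp - lk, mvec B (yk - yp)⟫ := by
  have hγ0 : γ ≠ 0 := hγ.ne'
  have hc0 : c ≠ 0 := hc.ne'
  have h2 : γ⁻¹ • (lp - lk) = mvec A xp + mvec B yp - b := by
    rw [hlam, add_sub_cancel_left, smul_smul, inv_mul_cancel₀ hγ0, one_smul]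
  have hAv : mvec A (xs - xp) = mvec B (yp - ys) - γ⁻¹ • (lp - lk) := by
    have h1 : mvec A xs = b - mvec B ys := by
      rw [sub_eq_zero] at hfeas
      exact eq_sub_of_add_eq hfeas
    rw [mvec_sub, mvec_sub, h1, h2]
    abel
  have hW : lk + γ • (mvec A xk + mvec B yk - b)
      = lp + γ • mvec A (xk - xp) + γ • mvec B (yk - yp) := by
    rw [hlam, mvec_sub, mvec_sub]
    module
  have H2 : ⟪δv + mvec Aᵀ (lk + γ • (mvec A xk + mvec B yk - b)), xs - xp⟫
      = ⟪δv, xs - xp⟫ + ⟪lk + γ • (mvec A xk + mvec B yk - b), mvec A (xs - xp)⟫ := by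
    rw [inner_add_left, inner_mvec_transpose]
  have H3 : ⟪lk + γ • (mvec A xk + mvec B yk - b), mvec A (xs - xp)⟫
      = ⟪lp, mvec A (xs - xp)⟫ + γ * ⟪mvec A (xk - xp), mvec A (xs - xp)⟫
        + γ * ⟪mvec B (yk - yp), mvec A (xs - xp)⟫ := by
    rw [hW, inner_add_left, inner_add_left, real_inner_smul_left, real_inner_smul_left]
  have H4 : ⟪lp, mvec A (xs - xp)⟫
      = ⟪lp, mvec B (yp - ys)⟫ - γ⁻¹ * ⟪lp, lp - lk⟫ := by
    rw [hAv, inner_sub_right, real_inner_smul_right]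
  have H5 : γ * ⟪mvec B (yk - yp), mvec A (xs - xp)⟫
      = γ * ⟪mvec B (yk - yp), mvec B (yp - ys)⟫ - ⟪mvec B (yk - yp), lp - lk⟫ := by
    rw [hAv, inner_sub_right, real_inner_smul_right]
    field_simp
  have H6 : ⟪δv, xs - xp⟫ = ⟪δv, xs - xk⟫ - ⟪δv, xp - xk⟫ := by
    rw [show xs - xp = (xs - xk) - (xp - xk) by abel, inner_sub_right]
  have H7 : c⁻¹ * ⟪xk - xp, xs - xp⟫
      = (c⁻¹ * ‖xp - xk‖^2 + c⁻¹ * ‖xs - xp‖^2 - c⁻¹ * ‖xs - xk‖^2)/2 := by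
    have hp : ‖(xk - xp) - (xs - xp)‖^2 = ‖xs - xk‖^2 := by
      rw [show (xk - xp) - (xs - xp) = -(xs - xk) by abel, norm_neg]
    have hq : ‖xk - xp‖ = ‖xp - xk‖ := by rw [← neg_sub, norm_neg]
    have := norm_sub_sq_real (xk - xp) (xs - xp)
    rw [hp, hq] at this
    linear_combination c⁻¹/2 * this
  have H8 : γ * ⟪mvec A (xk - xp), mvec A (xs - xp)⟫
      = (γ * ‖mvec A (xp - xk)‖^2 + γ * ‖mvec A (xs - xp)‖^2 - γ * ‖mvec A (xs - xk)‖^2)/2 := by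
    have hp : ‖mvec A (xk - xp) - mvec A (xs - xp)‖^2 = ‖mvec A (xs - xk)‖^2 := by
      rw [← mvec_sub, show (xk - xp) - (xs - xp) = -(xs - xk) by abel, mvec_neg, norm_neg]
    have hq : ‖mvec A (xk - xp)‖ = ‖mvec A (xp - xk)‖ := by
      rw [show xk - xp = -(xp - xk) by abel, mvec_neg, norm_neg]
    have := norm_sub_sq_real (mvec A (xk - xp)) (mvec A (xs - xp))
    rw [hp, hq] at this
    linear_combination γ/2 * this
  have H9 : γ * ⟪mvec B (yk - yp), mvec B (yp - ys)⟫
      = -((γ * ‖mvec B (yp - yk)‖^2 + γ * ‖mvec B (yp - ys)‖^2 - γ * ‖mvec B (yk - ys)‖^2)/2) := by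
    have hc1 : ⟪mvec B (yk - yp), mvec B (yp - ys)⟫ = -⟪mvec B (yp - yk), mvec B (yp - ys)⟫ := by
      rw [show yk - yp = -(yp - yk) by abel, mvec_neg, inner_neg_left]
    have hp : ‖mvec B (yp - yk) - mvec B (yp - ys)‖^2 = ‖mvec B (yk - ys)‖^2 := by
      rw [← mvec_sub, show (yp - yk) - (yp - ys) = -(yk - ys) by abel, mvec_neg, norm_neg]
    have := norm_sub_sq_real (mvec B (yp - yk)) (mvec B (yp - ys))
    rw [hp] at this
    rw [hc1]
    linear_combination -γ/2 * this
  have H10 : ⟪l, b - mvec A xp - mvec B yp⟫ = -(γ⁻¹ * ⟪l, lp - lk⟫) := by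
    rw [show b - mvec A xp - mvec B yp = -(γ⁻¹ • (lp - lk)) by rw [h2]; abel,
      inner_neg_right, real_inner_smul_right]
  have H11 : γ⁻¹ * ⟪lp, lp - lk⟫ - γ⁻¹ * ⟪l, lp - lk⟫
      = (γ⁻¹ * ‖l - lp‖^2 + γ⁻¹ * ‖lp - lk‖^2 - γ⁻¹ * ‖l - lk‖^2)/2 := by
    have hs : ⟪lp, lp - lk⟫ - ⟪l, lp - lk⟫ = ⟪lp - l, lp - lk⟫ := by
      rw [inner_sub_left]
    have hp : ‖(lp - l) - (lp - lk)‖^2 = ‖l - lk‖^2 := by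
      rw [show (lp - l) - (lp - lk) = -(l - lk) by abel, norm_neg]
    have hq : ‖lp - l‖ = ‖l - lp‖ := by rw [← neg_sub, norm_neg]
    have := norm_sub_sq_real (lp - l) (lp - lk)
    rw [hp, hq] at this
    linear_combination γ⁻¹/2 * this + γ⁻¹ * hs
  have H12 : ⟪mvec B (yk - yp), lp - lk⟫ = ⟪lp - lk, mvec B (yk - yp)⟫ := real_inner_comm _ _
  have H13 : qnorm (c⁻¹ • (1 - (γ*c) • (Aᵀ*A)) - (L+σ) • 1) (xp - xk)
      = c⁻¹ * ‖xp - xk‖^2 - γ * ‖mvec A (xp - xk)‖^2 - (L * ‖xp - xk‖^2 + σ * ‖xp - xk‖^2) := by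
    rw [qnorm_smul_sub_one, qnorm_Q]
    field_simp
  have H14 : c⁻¹ * qnorm (1 - (γ*c) • (Aᵀ*A)) (xs - xk)
      = c⁻¹ * ‖xs - xk‖^2 - γ * ‖mvec A (xs - xk)‖^2 := by
    rw [qnorm_Q]; field_simp
  have H15 : c⁻¹ * qnorm (1 - (γ*c) • (Aᵀ*A)) (xs - xp)
      = c⁻¹ * ‖xs - xp‖^2 - γ * ‖mvec A (xs - xp)‖^2 := by
    rw [qnorm_Q]; field_simp
  have H16 : ⟪xs - xk, δv⟫ = ⟪δv, xs - xk⟫ := real_inner_comm _ _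
  have H17 := young_delta δv (xp - xk) hsk hσ
  linarith [hG, H2, H3, H4, H5, H6, H7, H8, H9, H10, H11, H12, H13, H14, H15, H16, H17]
lemma vi_min {E : Type*} [NormedAddCommGroup E] [InnerProductSpace ℝ E] {s : Set E}
    {φ : E → ℝ} (hφ : ConvexOn ℝ s φ) {u : E} (hu : u ∈ s)
    (G H : E → ℝ) (hH : ∀ w, 0 ≤ H w)
    (ψ : E → ℝ)
    (hq : ∀ w (t : ℝ), ψ (u + t • w) = ψ u + t * G w + t^2 * H w)
    (hmin : ∀ z ∈ s, φ u + ψ u ≤ φ z + ψ z) :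
    ∀ z ∈ s, φ u ≤ φ z + G (z - u) := by
  intro z hz
  have key : ∀ t : ℝ, 0 < t → t ≤ 1 → φ u ≤ φ z + G (z - u) + t * H (z - u) := by
    intro t ht ht1
    have hmem : u + t • (z - u) ∈ s := by
      have := hφ.1 hu hz (by linarith : (0:ℝ) ≤ 1 - t) ht.le (by ring)
      convert this using 1
      module
    have h1 := hmin _ hmem
    have h2 : φ (u + t • (z - u)) ≤ (1 - t) * φ u + t * φ z := by
      have := hφ.2 hu hz (by linarith : (0:ℝ) ≤ 1 - t) ht.le (by ring)
      calc φ (u + t • (z - u)) = φ ((1-t) • u + t • z) := by congr 1; module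
        _ ≤ (1-t) * φ u + t * φ z := by simpa using this
    rw [hq (z - u) t] at h1
    nlinarith [hH (z - u)]
  have hlim : Tendsto (fun n : ℕ => φ z + G (z - u) + (1 / (n+1) : ℝ) * H (z - u)) atTop
      (𝓝 (φ z + G (z - u))) := by
    have : Tendsto (fun n : ℕ => (1 / (n+1) : ℝ)) atTop (𝓝 0) :=
      tendsto_one_div_add_atTop_nhds_zero_nat
    have := (this.const_mul (H (z-u))).const_add (φ z + G (z - u))
    simpa [mul_comm] using this
  refine ge_of_tendsto hlim ?_
  filter_upwards with n
  exact key (1/(n+1)) (by positivity) (by rw [div_le_one (by positivity)]; linarith [Nat.cast_nonneg (α := ℝ) n])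

lemma descent {E : Type*} [NormedAddCommGroup E] [InnerProductSpace ℝ E] [CompleteSpace E]
    {f : E → ℝ} {f' : E → E} {L : ℝ}
    (hgrad : ∀ z, HasGradientAt f (f' z) z)
    (hLip : ∀ z w, ‖f' z - f' w‖ ≤ L * ‖z - w‖) (z w : E) :
    f w ≤ f z + ⟪f' z, w - z⟫ + L / 2 * ‖w - z‖ ^ 2 := by
  set v := w - z with hv
  set Φ : ℝ → ℝ := fun t => f (z + t • v) - t * ⟪f' z, v⟫ - L/2 * t^2 * ‖v‖^2 with hΦ
  have hder : ∀ t : ℝ, HasDerivAt Φ (⟪f' (z + t • v), v⟫ - ⟪f' z, v⟫ - L * t * ‖v‖^2) t := by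
    intro t
    have hline : HasDerivAt (fun t : ℝ => z + t • v) v t := by
      simpa using ((hasDerivAt_id t).smul_const v).const_add z
    have h1 : HasDerivAt (fun t : ℝ => f (z + t • v)) ⟪f' (z + t • v), v⟫ t := by
      have := (hgrad (z + t • v)).hasFDerivAt.comp_hasDerivAt t hline
      simpa [InnerProductSpace.toDual_apply_apply, Function.comp_def] using this
    have h2 : HasDerivAt (fun t : ℝ => t * ⟪f' z, v⟫) ⟪f' z, v⟫ t := by
      simpa using (hasDerivAt_id t).mul_const (⟪f' z, v⟫)
    have h3 : HasDerivAt (fun t : ℝ => L/2 * t^2 * ‖v‖^2) (L * t * ‖v‖^2) t := by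
      have := ((hasDerivAt_pow 2 t).const_mul (L/2)).mul_const (‖v‖^2)
      rw [show L / 2 * (((2:ℕ):ℝ) * t ^ (2 - 1)) * ‖v‖ ^ 2 = L * t * ‖v‖^2 by push_cast; ring] at this
      exact this
    exact (h1.sub h2).sub h3
  have hmono : Φ 1 ≤ Φ 0 := by
    have hcont : ContinuousOn Φ (Set.Icc 0 1) :=
      fun t _ => ((hder t).continuousAt).continuousWithinAt
    have hdiff : ∀ t ∈ interior (Set.Icc (0:ℝ) 1), DifferentiableAt ℝ Φ t :=
      fun t _ => (hder t).differentiableAt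
    have hnonpos : ∀ t ∈ interior (Set.Icc (0:ℝ) 1), deriv Φ t ≤ 0 := by
      intro t ht
      rw [interior_Icc] at ht
      rw [(hder t).deriv]
      have hcs : ⟪f' (z + t • v) - f' z, v⟫ ≤ ‖f' (z + t • v) - f' z‖ * ‖v‖ :=
        real_inner_le_norm _ _
      have hlip := hLip (z + t • v) z
      have hzz : ‖z + t • v - z‖ = t * ‖v‖ := by
        rw [add_sub_cancel_left, norm_smul, Real.norm_eq_abs, abs_of_pos ht.1]
      rw [hzz] at hlip
      have h4 : ⟪f' (z + t • v), v⟫ - ⟪f' z, v⟫ ≤ L * (t * ‖v‖) * ‖v‖ := by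
        rw [← inner_sub_left]
        calc ⟪f' (z + t • v) - f' z, v⟫ ≤ ‖f' (z + t • v) - f' z‖ * ‖v‖ := hcs
          _ ≤ L * (t * ‖v‖) * ‖v‖ := mul_le_mul_of_nonneg_right hlip (norm_nonneg v)
      nlinarith
    have hanti := antitoneOn_of_deriv_nonpos (convex_Icc (0:ℝ) 1) hcont
      (fun t ht => (hdiff t ht).differentiableWithinAt) hnonpos
    exact hanti (Set.left_mem_Icc.2 zero_le_one) (Set.right_mem_Icc.2 zero_le_one) zero_le_one
  have h0 : Φ 0 = f z := by simp [hΦ]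
  have h1 : Φ 1 = f w - ⟪f' z, v⟫ - L/2 * ‖v‖^2 := by
    simp only [hΦ, one_smul, one_pow, one_mul]
    have : z + v = w := by rw [hv]; abel
    rw [this]; ring
  rw [h0, h1] at hmono
  linarith
lemma line_hasDerivAt {E : Type*} [NormedAddCommGroup E] [InnerProductSpace ℝ E] [CompleteSpace E]
    {f : E → ℝ} {f' : E → E} (hgrad : ∀ z, HasGradientAt f (f' z) z) (z v : E) (t : ℝ) :
    HasDerivAt (fun t : ℝ => f (z + t • v)) ⟪f' (z + t • v), v⟫ t := by
  have hline : HasDerivAt (fun t : ℝ => z + t • v) v t := by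
    simpa using ((hasDerivAt_id t).smul_const v).const_add z
  have := (hgrad (z + t • v)).hasFDerivAt.comp_hasDerivAt t hline
  simpa [InnerProductSpace.toDual_apply_apply, Function.comp_def] using this

lemma convex_grad_ineq {E : Type*} [NormedAddCommGroup E] [InnerProductSpace ℝ E] [CompleteSpace E]
    {f : E → ℝ} {f' : E → E}
    (hconv : ConvexOn ℝ Set.univ f) (hgrad : ∀ z, HasGradientAt f (f' z) z) (w z : E) :
    f w + ⟪f' w, z - w⟫ ≤ f z := by
  set v := z - w with hv
  have hder := line_hasDerivAt hgrad w v 0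
  rw [show w + (0:ℝ) • v = w by simp] at hder
  have htend : Tendsto (fun t : ℝ => (f (w + t • v) - f w) / t) (𝓝[≠] 0) (𝓝 ⟪f' w, v⟫) := by
    have := hasDerivAt_iff_tendsto_slope.1 hder
    refine this.congr' ?_
    filter_upwards [self_mem_nhdsWithin] with t ht
    simp only [slope_def_field, slope, vsub_eq_sub, sub_zero, zero_smul, add_zero,
      smul_eq_mul, div_eq_inv_mul]
  have htend2 : Tendsto (fun t : ℝ => (f (w + t • v) - f w) / t) (𝓝[>] 0) (𝓝 ⟪f' w, v⟫) :=
    htend.mono_left (nhdsWithin_mono 0 (fun t ht => ne_of_gt ht))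
  have hub : ∀ᶠ t in 𝓝[>] (0:ℝ), (f (w + t • v) - f w) / t ≤ f z - f w := by
    filter_upwards [Ioo_mem_nhdsGT_of_mem (Set.mem_Ico.2 ⟨le_refl (0:ℝ), zero_lt_one⟩)] with t ht
    obtain ⟨ht0, ht1⟩ := ht
    have hcvx := hconv.2 (Set.mem_univ w) (Set.mem_univ z)
      (by linarith : (0:ℝ) ≤ 1 - t) ht0.le (by ring)
    have heq : (1 - t) • w + t • z = w + t • v := by rw [hv]; module
    rw [heq] at hcvx
    rw [div_le_iff₀ ht0]
    simp only [smul_eq_mul] at hcvx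
    nlinarith
  have := le_of_tendsto htend2 hub
  linarith

end Helpers

set_option maxHeartbeats 2000000

/-- Lemma 1 of the paper: the fundamental one-step inequality for
SPG-ADMM.  Extended-real-valued proper closed convex functions `ξ_i` and `g` are
modelled as real-valued convex functions on their (closed, nonempty, convex) effective
domains `domξ i` and `domg`. -/
theorem spg_admm_one_step_inequality
    {N : ℕ} {n m : Fin N → ℕ} {ny : ℕ}
    (A : ∀ i, Matrix (Fin (m i)) (Fin (n i)) ℝ)
    (B : ∀ i, Matrix (Fin (m i)) (Fin ny) ℝ)
    (b : ∀ i, EuclideanSpace ℝ (Fin (m i)))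
    (ξ : ∀ i, EuclideanSpace ℝ (Fin (n i)) → ℝ)
    (domξ : ∀ i, Set (EuclideanSpace ℝ (Fin (n i))))
    (f : ∀ i, EuclideanSpace ℝ (Fin (n i)) → ℝ)
    (f' : ∀ i, EuclideanSpace ℝ (Fin (n i)) → EuclideanSpace ℝ (Fin (n i)))
    (L : Fin N → ℝ)
    (g : EuclideanSpace ℝ (Fin ny) → ℝ)
    (domg : Set (EuclideanSpace ℝ (Fin ny)))
    (γ : Fin N → ℝ) (c : ℕ → Fin N → ℝ)
    (x : ℕ → ∀ i, EuclideanSpace ℝ (Fin (n i)))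
    (y : ℕ → EuclideanSpace ℝ (Fin ny))
    (lam : ℕ → ∀ i, EuclideanSpace ℝ (Fin (m i)))
    -- gradient-error vectors δ_i^k (noisy oracle errors)
    (δ : ℕ → ∀ i, EuclideanSpace ℝ (Fin (n i)))
    -- ξ_i proper closed convex
    (hξconv : ∀ i, ConvexOn ℝ (domξ i) (ξ i))
    (hξlsc : ∀ i, LowerSemicontinuousOn (ξ i) (domξ i))
    (hξcl : ∀ i, IsClosed (domξ i))
    (hξne : ∀ i, (domξ i).Nonempty)
    -- f_i convex with L_i-Lipschitz gradient
    (hfconv : ∀ i, ConvexOn ℝ Set.univ (f i))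
    (hfgrad : ∀ i z, HasGradientAt (f i) (f' i z) z)
    (hfLip : ∀ i z w, ‖f' i z - f' i w‖ ≤ L i * ‖z - w‖)
    -- g proper closed convex
    (hgconv : ConvexOn ℝ domg g)
    (hglsc : LowerSemicontinuousOn g domg)
    (hgcl : IsClosed domg)
    (hgne : domg.Nonempty)
    -- parameters: γ_i > 0 and the step-size condition
    (hγ : ∀ i, 0 < γ i)
    (hcpos : ∀ k i, 0 < c k i)
    (hcle : ∀ k i, c k i ≤ (L i + γ i * spec (A i) ^ 2
      + (if δ k i = 0 then (0:ℝ) else 1 + Real.sqrt k))⁻¹)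
    -- initial condition: −Σ Bᵢᵀ λᵢ⁰ ∈ ∂g(y⁰)
    (hinit : y 0 ∈ domg ∧ ∀ z ∈ domg,
      g (y 0) + ⟪-(∑ i, mvec (B i)ᵀ (lam 0 i)), z - y 0⟫ ≤ g z)
    -- SPG-ADMM x-update (stochastic proximal gradient step)
    (hxup : ∀ k i, x (k+1) i ∈ domξ i ∧ ∀ z ∈ domξ i,
      ξ i (x (k+1) i) + (2 * c k i)⁻¹ *
        ‖x (k+1) i - (x k i - c k i • (f' i (x k i) + δ k i +
          mvec (A i)ᵀ (lam k i + γ i • (mvec (A i) (x k i) + mvec (B i) (y k) - b i))))‖ ^ 2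
      ≤ ξ i z + (2 * c k i)⁻¹ *
        ‖z - (x k i - c k i • (f' i (x k i) + δ k i +
          mvec (A i)ᵀ (lam k i + γ i • (mvec (A i) (x k i) + mvec (B i) (y k) - b i))))‖ ^ 2)
    -- SPG-ADMM y-update
    (hyup : ∀ k, y (k+1) ∈ domg ∧ ∀ z ∈ domg,
      g (y (k+1)) + ∑ i, γ i / 2 *
        ‖mvec (A i) (x (k+1) i) + mvec (B i) (y (k+1)) - b i + (γ i)⁻¹ • lam k i‖ ^ 2
      ≤ g z + ∑ i, γ i / 2 *
        ‖mvec (A i) (x (k+1) i) + mvec (B i) z - b i + (γ i)⁻¹ • lam k i‖ ^ 2)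
    -- SPG-ADMM dual update
    (hlamup : ∀ k i, lam (k+1) i
      = lam k i + γ i • (mvec (A i) (x (k+1) i) + mvec (B i) (y (k+1)) - b i))
    -- (x*, y*, λ*) ∈ χ*, a saddle point of the Lagrangian
    (xs : ∀ i, EuclideanSpace ℝ (Fin (n i)))
    (ys : EuclideanSpace ℝ (Fin ny))
    (ls : ∀ i, EuclideanSpace ℝ (Fin (m i)))
    (hsad₁ : ∀ i, xs i ∈ domξ i) (hsad₂ : ys ∈ domg)
    (hsad₃ : ∀ (x' : ∀ i, EuclideanSpace ℝ (Fin (n i))) (y' : EuclideanSpace ℝ (Fin ny)),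
      (∀ i, x' i ∈ domξ i) → y' ∈ domg →
      g ys + ∑ i, (ξ i (xs i) + f i (xs i))
        + ∑ i, ⟪ls i, mvec (A i) (xs i) + mvec (B i) ys - b i⟫
      ≤ g y' + ∑ i, (ξ i (x' i) + f i (x' i))
        + ∑ i, ⟪ls i, mvec (A i) (x' i) + mvec (B i) y' - b i⟫)
    (hsad₄ : ∀ l : ∀ i, EuclideanSpace ℝ (Fin (m i)),
      g ys + ∑ i, (ξ i (xs i) + f i (xs i))
        + ∑ i, ⟪l i, mvec (A i) (xs i) + mvec (B i) ys - b i⟫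
      ≤ g ys + ∑ i, (ξ i (xs i) + f i (xs i))
        + ∑ i, ⟪ls i, mvec (A i) (xs i) + mvec (B i) ys - b i⟫) :
    -- conclusion: for every k ≥ 0 and every λ, inequality (8) of Lemma 1 holds
    ∀ (k : ℕ) (l : ∀ i, EuclideanSpace ℝ (Fin (m i))),
      (1/2 : ℝ) * ∑ i,
        (qnorm ((c k i)⁻¹ • (1 - (γ i * c k i) • ((A i)ᵀ * A i))
            - (L i + (if δ k i = 0 then (0:ℝ) else 1 + Real.sqrt k)) • 1)
            (x (k+1) i - x k i)
          + γ i * ‖mvec (B i) (y (k+1) - y k)‖ ^ 2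
          + (γ i)⁻¹ * ‖lam (k+1) i - lam k i‖ ^ 2)
      ≤ (g ys + ∑ i, (ξ i (xs i) + f i (xs i)))
          - (g (y (k+1)) + ∑ i, (ξ i (x (k+1) i) + f i (x (k+1) i)))
        + ∑ i, ⟪l i, b i - mvec (A i) (x (k+1) i) - mvec (B i) (y (k+1))⟫
        + (1/2 : ℝ) * ∑ i,
          ((c k i)⁻¹ * qnorm (1 - (γ i * c k i) • ((A i)ᵀ * A i)) (xs i - x k i)
            - (c k i)⁻¹ * qnorm (1 - (γ i * c k i) • ((A i)ᵀ * A i)) (xs i - x (k+1) i)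
            + γ i * ‖mvec (B i) (y k - ys)‖ ^ 2
            - γ i * ‖mvec (B i) (y (k+1) - ys)‖ ^ 2
            + (γ i)⁻¹ * ‖l i - lam k i‖ ^ 2
            - (γ i)⁻¹ * ‖l i - lam (k+1) i‖ ^ 2
            + 2 * ⟪xs i - x k i, δ k i⟫
            + ‖δ k i‖ ^ 2 / (1 + Real.sqrt k)) := by
  intro k l
  have hsk : (0:ℝ) < 1 + Real.sqrt k := by positivity
  -- feasibility of the saddle point
  have hfeas : ∀ i, mvec (A i) (xs i) + mvec (B i) ys - b i = 0 := by
    have h := hsad₄ (fun i => ls i + (mvec (A i) (xs i) + mvec (B i) ys - b i))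
    simp only [inner_add_left] at h
    have hh : ∑ i, (⟪ls i, mvec (A i) (xs i) + mvec (B i) ys - b i⟫
          + ⟪mvec (A i) (xs i) + mvec (B i) ys - b i, mvec (A i) (xs i) + mvec (B i) ys - b i⟫)
        = ∑ i, ⟪ls i, mvec (A i) (xs i) + mvec (B i) ys - b i⟫
          + ∑ i, ⟪mvec (A i) (xs i) + mvec (B i) ys - b i,
              mvec (A i) (xs i) + mvec (B i) ys - b i⟫ := Finset.sum_add_distrib
    have h2 : ∑ i, ⟪mvec (A i) (xs i) + mvec (B i) ys - b i,
        mvec (A i) (xs i) + mvec (B i) ys - b i⟫ ≤ 0 := by linarith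
    intro i
    have hz : ⟪mvec (A i) (xs i) + mvec (B i) ys - b i,
        mvec (A i) (xs i) + mvec (B i) ys - b i⟫ = 0 := by
      have hle := Finset.single_le_sum
        (f := fun j => ⟪mvec (A j) (xs j) + mvec (B j) ys - b j,
          mvec (A j) (xs j) + mvec (B j) ys - b j⟫)
        (fun j _ => real_inner_self_nonneg) (Finset.mem_univ i)
      have hnn : (0:ℝ) ≤ ⟪mvec (A i) (xs i) + mvec (B i) ys - b i,
          mvec (A i) (xs i) + mvec (B i) ys - b i⟫ := real_inner_self_nonneg
      linarith
    exact inner_self_eq_zero.1 hz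
  -- y iterates stay in the domain of g
  have hydom : ∀ kk, y kk ∈ domg := by
    intro kk
    cases kk with
    | zero => exact hinit.1
    | succ j => exact (hyup j).1
  -- subgradient property of g at every iterate
  have Gsub : ∀ kk, ∀ z ∈ domg, g (y kk) ≤ g z + ∑ i, ⟪lam kk i, mvec (B i) (z - y kk)⟫ := by
    intro kk
    cases kk with
    | zero =>
      intro z hz
      have h := hinit.2 z hz
      have he : ⟪-(∑ i, mvec (B i)ᵀ (lam 0 i)), z - y 0⟫
          = -∑ i, ⟪lam 0 i, mvec (B i) (z - y 0)⟫ := by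
        rw [inner_neg_left, sum_inner]
        congr 1
        exact Finset.sum_congr rfl fun i _ => inner_mvec_transpose _ _ _
      rw [he] at h
      linarith
    | succ j =>
      have := vi_min (s := domg) (φ := g) hgconv (u := y (j+1)) (hyup j).1
        (G := fun w => ∑ i, ⟪lam (j+1) i, mvec (B i) w⟫)
        (H := fun w => ∑ i, γ i / 2 * ‖mvec (B i) w‖^2)
        (fun w => Finset.sum_nonneg fun i _ => mul_nonneg (div_nonneg (hγ i).le (by norm_num)) (sq_nonneg _))
        (ψ := fun z => ∑ i, γ i / 2 *
          ‖mvec (A i) (x (j+1) i) + mvec (B i) z - b i + (γ i)⁻¹ • lam j i‖ ^ 2)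
        ?_ (fun z hz => (hyup j).2 z hz)
      · exact this
      · intro w t
        rw [Finset.mul_sum, Finset.mul_sum, ← Finset.sum_add_distrib, ← Finset.sum_add_distrib]
        refine Finset.sum_congr rfl fun i _ => ?_
        rw [mvec_add, mvec_smul]
        rw [show mvec (A i) (x (j+1) i) + (mvec (B i) (y (j+1)) + t • mvec (B i) w) - b i
            + (γ i)⁻¹ • lam j i
            = (mvec (A i) (x (j+1) i) + mvec (B i) (y (j+1)) - b i + (γ i)⁻¹ • lam j i)
              + t • mvec (B i) w by module]
        rw [norm_add_sq_real, real_inner_smul_right, norm_smul]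
        rw [show ⟪lam (j+1) i, mvec (B i) w⟫
            = γ i * ⟪mvec (A i) (x (j+1) i) + mvec (B i) (y (j+1)) - b i + (γ i)⁻¹ • lam j i,
                mvec (B i) w⟫ by
          rw [hlamup j i, ← real_inner_smul_left]
          congr 1
          rw [smul_add, smul_smul, mul_inv_cancel₀ (hγ i).ne', one_smul, smul_sub, smul_add]
          abel]
        simp only [Real.norm_eq_abs, mul_pow, sq_abs]
        ring
  -- monotonicity of the g-subgradient
  have Smono : 0 ≤ ∑ i, ⟪lam (k+1) i - lam k i, mvec (B i) (y k - y (k+1))⟫ := by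
    have h1 := Gsub k (y (k+1)) (hydom (k+1))
    have h2 := Gsub (k+1) (y k) (hydom k)
    have h3 : 0 ≤ ∑ i, ⟪lam k i, mvec (B i) (y (k+1) - y k)⟫
        + ∑ i, ⟪lam (k+1) i, mvec (B i) (y k - y (k+1))⟫ := by linarith
    rw [← Finset.sum_add_distrib] at h3
    refine le_of_le_of_eq h3 (Finset.sum_congr rfl fun i _ => ?_)
    rw [inner_sub_left, show mvec (B i) (y (k+1) - y k) = -(mvec (B i) (y k - y (k+1))) by
      rw [show y (k+1) - y k = -(y k - y (k+1)) by abel, mvec_neg], inner_neg_right]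
    ring
  -- the g-term bound at the saddle point
  have hS1 : ∑ i, ⟪lam (k+1) i, mvec (B i) (y (k+1) - ys)⟫ ≤ g ys - g (y (k+1)) := by
    have h1 := Gsub (k+1) ys hsad₂
    have h2 : ∑ i, ⟪lam (k+1) i, mvec (B i) (ys - y (k+1))⟫
        = -∑ i, ⟪lam (k+1) i, mvec (B i) (y (k+1) - ys)⟫ := by
      rw [← Finset.sum_neg_distrib]
      refine Finset.sum_congr rfl fun i _ => ?_
      rw [show mvec (B i) (ys - y (k+1)) = -(mvec (B i) (y (k+1) - ys)) by
        rw [show ys - y (k+1) = -(y (k+1) - ys) by abel, mvec_neg], inner_neg_right]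
    rw [h2] at h1
    linarith
  -- the x-update inequality (prox VI + descent lemma + convexity of f)
  have hGall : ∀ i,
      (c k i)⁻¹ * ⟪x k i - x (k+1) i, xs i - x (k+1) i⟫
        - ⟪δ k i + mvec (A i)ᵀ (lam k i + γ i • (mvec (A i) (x k i) + mvec (B i) (y k) - b i)),
            xs i - x (k+1) i⟫
        - L i / 2 * ‖x (k+1) i - x k i‖^2
      ≤ ξ i (xs i) + f i (xs i) - (ξ i (x (k+1) i) + f i (x (k+1) i)) := by
    intro i
    have hci : (0:ℝ) < c k i := hcpos k i
    set d : EuclideanSpace ℝ (Fin (n i)) := f' i (x k i) + δ k i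
      + mvec (A i)ᵀ (lam k i + γ i • (mvec (A i) (x k i) + mvec (B i) (y k) - b i)) with hd
    set p : EuclideanSpace ℝ (Fin (n i)) := x k i - c k i • d with hp
    have hVI := vi_min (s := domξ i) (φ := ξ i) (hξconv i) (u := x (k+1) i) (hxup k i).1
      (G := fun w => (c k i)⁻¹ * ⟪x (k+1) i - p, w⟫)
      (H := fun w => (2 * c k i)⁻¹ * ‖w‖^2)
      (fun w => mul_nonneg (inv_nonneg.2 (by linarith)) (sq_nonneg _))
      (ψ := fun z => (2 * c k i)⁻¹ * ‖z - p‖ ^ 2)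
      ?_ (fun z hz => (hxup k i).2 z hz) (xs i) (hsad₁ i)
    · have hdesc := descent (hfgrad i) (hfLip i) (x k i) (x (k+1) i)
      have hconv := convex_grad_ineq (hfconv i) (hfgrad i) (x k i) (xs i)
      have e1 : (c k i)⁻¹ * ⟪x (k+1) i - p, xs i - x (k+1) i⟫
          = -((c k i)⁻¹ * ⟪x k i - x (k+1) i, xs i - x (k+1) i⟫)
            + ⟪f' i (x k i), xs i - x (k+1) i⟫
            + ⟪δ k i + mvec (A i)ᵀ (lam k i
                + γ i • (mvec (A i) (x k i) + mvec (B i) (y k) - b i)), xs i - x (k+1) i⟫ := by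
        rw [show x (k+1) i - p = -(x k i - x (k+1) i) + c k i • d by rw [hp]; abel,
          inner_add_left, inner_neg_left, real_inner_smul_left, hd, add_assoc,
          inner_add_left]
        field_simp
        ring
      have e2 : ⟪f' i (x k i), xs i - x k i⟫ - ⟪f' i (x k i), x (k+1) i - x k i⟫
          = ⟪f' i (x k i), xs i - x (k+1) i⟫ := by
        rw [← inner_sub_right, show (xs i - x k i) - (x (k+1) i - x k i)
          = xs i - x (k+1) i by abel]
      linarith [hVI, hdesc, hconv, e1, e2]
    · intro w t
      rw [show x (k+1) i + t • w - p = (x (k+1) i - p) + t • w by module,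
        norm_add_sq_real, real_inner_smul_right, norm_smul]
      simp only [Real.norm_eq_abs, mul_pow, sq_abs]
      field_simp
  -- the per-block inequality
  have perI : ∀ i,
      (1/2) * (qnorm ((c k i)⁻¹ • (1 - (γ i * c k i) • ((A i)ᵀ * A i))
          - (L i + if δ k i = 0 then (0:ℝ) else 1 + Real.sqrt k) • 1) (x (k+1) i - x k i)
        + γ i * ‖mvec (B i) (y (k+1) - y k)‖^2 + (γ i)⁻¹ * ‖lam (k+1) i - lam k i‖^2)
      ≤ (ξ i (xs i) + f i (xs i) - (ξ i (x (k+1) i) + f i (x (k+1) i)))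
        + ⟪lam (k+1) i, mvec (B i) (y (k+1) - ys)⟫
        + ⟪l i, b i - mvec (A i) (x (k+1) i) - mvec (B i) (y (k+1))⟫
        + (1/2) * ((c k i)⁻¹ * qnorm (1 - (γ i * c k i) • ((A i)ᵀ * A i)) (xs i - x k i)
           - (c k i)⁻¹ * qnorm (1 - (γ i * c k i) • ((A i)ᵀ * A i)) (xs i - x (k+1) i)
           + γ i * ‖mvec (B i) (y k - ys)‖^2 - γ i * ‖mvec (B i) (y (k+1) - ys)‖^2
           + (γ i)⁻¹ * ‖l i - lam k i‖^2 - (γ i)⁻¹ * ‖l i - lam (k+1) i‖^2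
           + 2 * ⟪xs i - x k i, δ k i⟫ + ‖δ k i‖^2 / (1 + Real.sqrt k))
        - ⟪lam (k+1) i - lam k i, mvec (B i) (y k - y (k+1))⟫ := by
    intro i
    have hσ : (if δ k i = 0 then (0:ℝ) else 1 + Real.sqrt k) = 1 + Real.sqrt k
        ∨ ((if δ k i = 0 then (0:ℝ) else 1 + Real.sqrt k) = 0 ∧ δ k i = 0) := by
      by_cases h : δ k i = 0
      · exact Or.inr ⟨if_pos h, h⟩
      · exact Or.inl (if_neg h)
    exact per_i (A i) (B i) (b i) (c k i) (γ i) (L i) _ _ (hcpos k i) (hγ i) hsk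
      (x k i) (x (k+1) i) (xs i) (δ k i) (y k) (y (k+1)) ys
      (lam k i) (lam (k+1) i) (l i) _ hσ (hfeas i) (hlamup k i) (hGall i)
  -- assemble
  have hsum := Finset.sum_le_sum (s := Finset.univ) (fun i _ => perI i)
  rw [← Finset.mul_sum] at hsum
  have hsplit : ∑ i, ((ξ i (xs i) + f i (xs i) - (ξ i (x (k+1) i) + f i (x (k+1) i)))
        + ⟪lam (k+1) i, mvec (B i) (y (k+1) - ys)⟫
        + ⟪l i, b i - mvec (A i) (x (k+1) i) - mvec (B i) (y (k+1))⟫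
        + (1/2) * ((c k i)⁻¹ * qnorm (1 - (γ i * c k i) • ((A i)ᵀ * A i)) (xs i - x k i)
           - (c k i)⁻¹ * qnorm (1 - (γ i * c k i) • ((A i)ᵀ * A i)) (xs i - x (k+1) i)
           + γ i * ‖mvec (B i) (y k - ys)‖^2 - γ i * ‖mvec (B i) (y (k+1) - ys)‖^2
           + (γ i)⁻¹ * ‖l i - lam k i‖^2 - (γ i)⁻¹ * ‖l i - lam (k+1) i‖^2
           + 2 * ⟪xs i - x k i, δ k i⟫ + ‖δ k i‖^2 / (1 + Real.sqrt k))
        - ⟪lam (k+1) i - lam k i, mvec (B i) (y k - y (k+1))⟫)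
      = ∑ i, (ξ i (xs i) + f i (xs i)) - ∑ i, (ξ i (x (k+1) i) + f i (x (k+1) i))
        + ∑ i, ⟪lam (k+1) i, mvec (B i) (y (k+1) - ys)⟫
        + ∑ i, ⟪l i, b i - mvec (A i) (x (k+1) i) - mvec (B i) (y (k+1))⟫
        + ∑ i, ((1/2) * ((c k i)⁻¹ * qnorm (1 - (γ i * c k i) • ((A i)ᵀ * A i)) (xs i - x k i)
           - (c k i)⁻¹ * qnorm (1 - (γ i * c k i) • ((A i)ᵀ * A i)) (xs i - x (k+1) i)
           + γ i * ‖mvec (B i) (y k - ys)‖^2 - γ i * ‖mvec (B i) (y (k+1) - ys)‖^2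
           + (γ i)⁻¹ * ‖l i - lam k i‖^2 - (γ i)⁻¹ * ‖l i - lam (k+1) i‖^2
           + 2 * ⟪xs i - x k i, δ k i⟫ + ‖δ k i‖^2 / (1 + Real.sqrt k)))
        - ∑ i, ⟪lam (k+1) i - lam k i, mvec (B i) (y k - y (k+1))⟫ := by
    simp only [Finset.sum_add_distrib, Finset.sum_sub_distrib]
  have hms : (1/2:ℝ) * ∑ i, ((c k i)⁻¹ * qnorm (1 - (γ i * c k i) • ((A i)ᵀ * A i)) (xs i - x k i)
           - (c k i)⁻¹ * qnorm (1 - (γ i * c k i) • ((A i)ᵀ * A i)) (xs i - x (k+1) i)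
           + γ i * ‖mvec (B i) (y k - ys)‖^2 - γ i * ‖mvec (B i) (y (k+1) - ys)‖^2
           + (γ i)⁻¹ * ‖l i - lam k i‖^2 - (γ i)⁻¹ * ‖l i - lam (k+1) i‖^2
           + 2 * ⟪xs i - x k i, δ k i⟫ + ‖δ k i‖^2 / (1 + Real.sqrt k))
      = ∑ i, ((1/2) * ((c k i)⁻¹ * qnorm (1 - (γ i * c k i) • ((A i)ᵀ * A i)) (xs i - x k i)
           - (c k i)⁻¹ * qnorm (1 - (γ i * c k i) • ((A i)ᵀ * A i)) (xs i - x (k+1) i)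
           + γ i * ‖mvec (B i) (y k - ys)‖^2 - γ i * ‖mvec (B i) (y (k+1) - ys)‖^2
           + (γ i)⁻¹ * ‖l i - lam k i‖^2 - (γ i)⁻¹ * ‖l i - lam (k+1) i‖^2
           + 2 * ⟪xs i - x k i, δ k i⟫ + ‖δ k i‖^2 / (1 + Real.sqrt k))) := Finset.mul_sum _ _ _
  have hA : ∑ i, (ξ i (xs i) + f i (xs i)) = ∑ i, ξ i (xs i) + ∑ i, f i (xs i) :=
    Finset.sum_add_distrib
  have hB : ∑ i, (ξ i (x (k+1) i) + f i (x (k+1) i))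
      = ∑ i, ξ i (x (k+1) i) + ∑ i, f i (x (k+1) i) := Finset.sum_add_distrib
  rw [hsplit] at hsum
  linarith [hsum, hS1, Smono, hms, hA, hB]
end

section
/- Suppose the initial point w⁰ = (x⁰, y⁰, λ⁰) satisfies −Σ_{i=1}^N B_iᵀ λ_i⁰ ∈ ∂g(y⁰), and let {(x^k, y^k, λ^k)} be generated by PG-ADMM (i.e. δ_i^k = 0 for all i,k) with constant step sizes c_i^k = c_i ∈ (0, 1/(L_i + γ_i‖A_i‖²)]. Then for every t ≥ 1, every λ = (λ_1,…,λ_N), and every (x*, y*, λ*) ∈ χ*: F(ū^t) − F(x*,y*) + Σ_{i=1}^N ⟨λ_i, A_i x̄_i^t + B_i ȳ^t − b_i⟩ ≤ (1/(2t)) Σ_{i=1}^N [ (1/γ_i)‖λ_i − λ_i⁰‖² + (1/c_i)‖x_i* − x_i⁰‖²_{I − γ_i c_i A_iᵀA_i} ] + (1/(2t)) ‖y* − y⁰‖²_{Σ_{i=1}^N γ_i B_iᵀB_i}, where ‖v‖²_Q = vᵀQv. -/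
open Finset Matrix MeasureTheory Filter
open scoped RealInnerProductSpace

section AuxPGADMM

open Finset Matrix Filter
open scoped RealInnerProductSpace

namespace PGADMMAux

variable {ι κ : Type*} [Fintype ι] [Fintype κ]

lemma mvec_sub' (A : Matrix ι κ ℝ) (u v : EuclideanSpace ℝ κ) :
    mvec A (u - v) = mvec A u - mvec A v :=
  congrArg (WithLp.toLp 2) (Matrix.mulVec_sub A u v)

lemma mvec_add' (A : Matrix ι κ ℝ) (u v : EuclideanSpace ℝ κ) :
    mvec A (u + v) = mvec A u + mvec A v :=
  congrArg (WithLp.toLp 2) (Matrix.mulVec_add A u v)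

lemma mvec_smul' (A : Matrix ι κ ℝ) (r : ℝ) (v : EuclideanSpace ℝ κ) :
    mvec A (r • v) = r • mvec A v :=
  congrArg (WithLp.toLp 2) (Matrix.mulVec_smul A r v)

lemma mvec_zero' (A : Matrix ι κ ℝ) : mvec A (0 : EuclideanSpace ℝ κ) = 0 :=
  congrArg (WithLp.toLp 2) (Matrix.mulVec_zero A)

lemma mvec_sum' {α : Type*} [DecidableEq α] (s : Finset α) (A : Matrix ι κ ℝ)
    (v : α → EuclideanSpace ℝ κ) :
    mvec A (∑ k ∈ s, v k) = ∑ k ∈ s, mvec A (v k) := by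
  induction s using Finset.induction with
  | empty => simpa using mvec_zero' A
  | insert _ _ hnot ih =>
      rw [Finset.sum_insert hnot, Finset.sum_insert hnot, mvec_add', ih]

lemma inner_mvec' (A : Matrix ι κ ℝ) (w : EuclideanSpace ℝ ι) (v : EuclideanSpace ℝ κ) :
    ⟪w, mvec A v⟫ = ⟪mvec Aᵀ w, v⟫ := by
  simp only [PiLp.inner_apply, RCLike.inner_apply, conj_trivial]
  simp only [mul_comm ((mvec A v).ofLp _), mul_comm (v.ofLp _)]
  have h1 : ∑ i, w i * mvec A v i = w ⬝ᵥ A.mulVec v := rfl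
  have h2 : ∑ i, mvec Aᵀ w i * v i = Aᵀ.mulVec w ⬝ᵥ v := rfl
  rw [h1, h2, Matrix.dotProduct_mulVec, ← Matrix.vecMul_transpose, Matrix.transpose_transpose]

lemma norm_mvec_le [DecidableEq κ] (A : Matrix ι κ ℝ) (v : EuclideanSpace ℝ κ) :
    ‖mvec A v‖ ≤ spec A * ‖v‖ :=
  by have h := (LinearMap.toContinuousLinearMap (Matrix.toEuclideanLin A)).le_opNorm v; exact h

lemma sq_norm_mvec_le [DecidableEq κ] (A : Matrix ι κ ℝ) (v : EuclideanSpace ℝ κ) :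
    ‖mvec A v‖^2 ≤ spec A^2 * ‖v‖^2 := by
  nlinarith [norm_mvec_le A v, norm_nonneg (mvec A v), norm_nonneg v,
    norm_nonneg (LinearMap.toContinuousLinearMap (Matrix.toEuclideanLin A))]

lemma qnorm_G [DecidableEq κ] (A : Matrix ι κ ℝ) (s : ℝ) (v : EuclideanSpace ℝ κ) :
    qnorm (1 - s • (Aᵀ * A)) v = ‖v‖^2 - s * ‖mvec A v‖^2 := by
  have hm : mvec (1 - s • (Aᵀ * A)) v = v - s • mvec Aᵀ (mvec A v) := by
    show WithLp.toLp 2 ((1 - s • (Aᵀ * A)).mulVec v) = _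
    rw [Matrix.sub_mulVec, Matrix.one_mulVec, Matrix.smul_mulVec, ← Matrix.mulVec_mulVec]
    rfl
  rw [qnorm, hm, inner_sub_right, real_inner_smul_right, inner_mvec', Matrix.transpose_transpose,
    real_inner_self_eq_norm_sq, real_inner_self_eq_norm_sq]

lemma qnorm_sum {N : ℕ} {d : ℕ} (M : Fin N → Matrix (Fin d) (Fin d) ℝ)
    (v : EuclideanSpace ℝ (Fin d)) :
    qnorm (∑ i, M i) v = ∑ i, qnorm (M i) v := by
  have hm : mvec (∑ i, M i) v = ∑ i, mvec (M i) v := by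
    show WithLp.toLp 2 ((∑ i, M i).mulVec v) = _
    have hr : ∀ (w : Fin N → EuclideanSpace ℝ (Fin d)) (j : Fin d),
        (∑ i, w i) j = ∑ i, w i j := by
      intro w j
      induction (Finset.univ : Finset (Fin N)) using Finset.induction with
      | empty => rfl
      | insert _ _ hnot ih =>
          rw [Finset.sum_insert hnot, Finset.sum_insert hnot, ← ih]
          rfl
    ext j
    rw [hr]
    simp [mvec, Matrix.mulVec, dotProduct, Matrix.sum_apply, Finset.sum_mul]
    rw [Finset.sum_comm]
  rw [qnorm, hm, inner_sum]
  rfl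

lemma qnorm_smulBtB {d e : ℕ} (B : Matrix (Fin d) (Fin e) ℝ) (s : ℝ)
    (v : EuclideanSpace ℝ (Fin e)) :
    qnorm (s • (Bᵀ * B)) v = s * ‖mvec B v‖^2 := by
  have hm : mvec (s • (Bᵀ * B)) v = s • mvec Bᵀ (mvec B v) := by
    show WithLp.toLp 2 ((s • (Bᵀ * B)).mulVec v) = _
    rw [Matrix.smul_mulVec, ← Matrix.mulVec_mulVec]
    rfl
  rw [qnorm, hm, real_inner_smul_right, inner_mvec', Matrix.transpose_transpose,
    real_inner_self_eq_norm_sq]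

variable {E : Type*} [NormedAddCommGroup E] [InnerProductSpace ℝ E]

lemma sq_norm_comb (u v : E) (t : ℝ) :
    ‖(1-t)•u + t•v‖^2 = (1-t)*‖u‖^2 + t*‖v‖^2 - t*(1-t)*‖u-v‖^2 := by
  have e : ∀ x : E, ‖x‖^2 = ⟪x,x⟫ := fun x => (real_inner_self_eq_norm_sq x).symm
  simp only [e, inner_add_left, inner_add_right, inner_sub_left, inner_sub_right,
    real_inner_smul_left, real_inner_smul_right, real_inner_comm v u]
  ring

lemma sq_norm_decomp (z x p : E) :
    ‖z - p‖^2 = ‖z - x‖^2 + 2*⟪z - x, x - p⟫ + ‖x - p‖^2 := by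
  have h : z - p = (z - x) + (x - p) := by abel
  rw [h, norm_add_sq_real]

lemma two_inner_eq (u v : E) : 2*⟪u,v⟫ = ‖u‖^2 + ‖v‖^2 - ‖u-v‖^2 := by
  have := norm_sub_sq_real u v; linarith

lemma strong_min {s : Set E} {φ : E → ℝ} (hφ : ConvexOn ℝ s φ)
    {q : E → ℝ} {R : E → E → ℝ}
    (hq : ∀ a ∈ s, ∀ b ∈ s, ∀ t : ℝ, 0 ≤ t → t ≤ 1 →
      q ((1-t)•a + t•b) = (1-t) * q a + t * q b - t*(1-t)/2 * R a b)
    (hR : ∀ a b, 0 ≤ R a b)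
    {x₀ : E} (hx₀ : x₀ ∈ s)
    (hmin : ∀ z ∈ s, φ x₀ + q x₀ ≤ φ z + q z) :
    ∀ z ∈ s, φ x₀ + q x₀ + R x₀ z / 2 ≤ φ z + q z := by
  intro z hz
  have key : ∀ t : ℝ, 0 < t → t ≤ 1 →
      φ x₀ + q x₀ + (1-t)/2 * R x₀ z ≤ φ z + q z := by
    intro t ht0 ht1
    have hu : (1-t)•x₀ + t•z ∈ s := hφ.1 hx₀ hz (by linarith) ht0.le (by ring)
    have h1 := hmin _ hu
    have h2 : φ ((1-t)•x₀ + t•z) ≤ (1-t)*φ x₀ + t*φ z :=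
      hφ.2 hx₀ hz (by linarith) ht0.le (by ring)
    have h3 := hq x₀ hx₀ z hz t ht0.le ht1
    have h4 : t * (φ x₀ + q x₀ + (1-t)/2 * R x₀ z) ≤ t * (φ z + q z) := by nlinarith
    exact le_of_mul_le_mul_left h4 ht0
  refine le_of_forall_pos_le_add ?_
  intro ε hε
  rcases eq_or_lt_of_le (hR x₀ z) with h | h
  · have := key 1 one_pos le_rfl
    rw [← h] at this ⊢
    linarith
  · set t : ℝ := min 1 (2*ε / R x₀ z) with htdef
    have ht0 : 0 < t := lt_min one_pos (by positivity)
    have ht1 : t ≤ 1 := min_le_left _ _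
    have := key t ht0 ht1
    have htR : t * R x₀ z ≤ 2*ε := by
      calc t * R x₀ z ≤ (2*ε / R x₀ z) * R x₀ z :=
            mul_le_mul_of_nonneg_right (min_le_right _ _) (hR x₀ z)
        _ = 2*ε := div_mul_cancel₀ _ (ne_of_gt h)
    linarith

variable [CompleteSpace E]

lemma curve_deriv (z d : E) (t : ℝ) : HasDerivAt (fun s : ℝ => z + s • d) d t := by
  simpa using ((hasDerivAt_id t).smul_const d).const_add z

lemma comp_grad_deriv {f : E → ℝ} {f' : E → E} (hgrad : ∀ z, HasGradientAt f (f' z) z)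
    (z d : E) (t : ℝ) :
    HasDerivAt (fun s : ℝ => f (z + s • d)) ⟪f' (z + t • d), d⟫ t := by
  have hfd := (hgrad (z + t • d)).hasFDerivAt
  have := hfd.comp_hasDerivAt t (curve_deriv z d t)
  exact this

lemma convex_grad_ineq {f : E → ℝ} {f' : E → E}
    (hconv : ConvexOn ℝ Set.univ f) (hgrad : ∀ z, HasGradientAt f (f' z) z)
    (z w : E) : f z + ⟪f' z, w - z⟫ ≤ f w := by
  set d := w - z with hd
  have hg : HasDerivAt (fun t : ℝ => f (z + t • d)) ⟪f' z, d⟫ 0 := by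
    have := comp_grad_deriv hgrad z d 0
    simpa using this
  have htend := hasDerivAt_iff_tendsto_slope.mp hg
  have htend' : Tendsto (slope (fun t : ℝ => f (z + t • d)) 0) (nhdsWithin 0 (Set.Ioi 0))
      (nhds ⟪f' z, d⟫) :=
    htend.mono_left (nhdsWithin_mono 0 (fun x hx => ne_of_gt hx))
  have hbound : ∀ᶠ t in nhdsWithin (0:ℝ) (Set.Ioi 0),
      slope (fun t : ℝ => f (z + t • d)) 0 t ≤ f w - f z := by
    filter_upwards [Ioc_mem_nhdsGT_of_mem (Set.mem_Ico.mpr ⟨le_rfl, one_pos⟩)] with t ht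
    have hcomb : z + t • d = (1-t) • z + t • w := by
      rw [hd]; module
    have hf := hconv.2 (Set.mem_univ z) (Set.mem_univ w) (by linarith [ht.2] : (0:ℝ) ≤ 1 - t)
      ht.1.le (by ring)
    rw [← hcomb] at hf
    rw [slope_def_field]
    simp only [zero_smul, add_zero, sub_zero]
    rw [div_le_iff₀ ht.1]
    simp only [smul_eq_mul] at hf
    nlinarith [ht.1]
  have := le_of_tendsto htend' hbound
  linarith

lemma descent_lemma {f : E → ℝ} {f' : E → E} {L : ℝ}
    (hgrad : ∀ z, HasGradientAt f (f' z) z)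
    (hlip : ∀ a b, ‖f' a - f' b‖ ≤ L * ‖a - b‖)
    (z w : E) : f w ≤ f z + ⟪f' z, w - z⟫ + L/2 * ‖w - z‖^2 := by
  set d := w - z with hd
  have hfcont : Continuous f' := by
    have : LipschitzWith (max L 0).toNNReal f' := by
      apply LipschitzWith.of_dist_le_mul
      intro a b
      rw [dist_eq_norm, dist_eq_norm]
      calc ‖f' a - f' b‖ ≤ L * ‖a - b‖ := hlip a b
        _ ≤ max L 0 * ‖a - b‖ := mul_le_mul_of_nonneg_right (le_max_left _ _) (norm_nonneg _)
        _ = (max L 0).toNNReal * ‖a - b‖ := by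
            rw [Real.coe_toNNReal _ (le_max_right _ _)]
    exact this.continuous
  have hcont : Continuous (fun t : ℝ => ⟪f' (z + t • d), d⟫) := by
    apply Continuous.inner
    · exact hfcont.comp (continuous_const.add (continuous_id.smul continuous_const))
    · exact continuous_const
  have hint : ∀ t ∈ Set.uIcc (0:ℝ) 1, HasDerivAt (fun s : ℝ => f (z + s • d))
      ⟪f' (z + t • d), d⟫ t := fun t _ => comp_grad_deriv hgrad z d t
  have hii : IntervalIntegrable (fun t : ℝ => ⟪f' (z + t • d), d⟫)
      MeasureTheory.volume 0 1 := hcont.intervalIntegrable 0 1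
  have heq := intervalIntegral.integral_eq_sub_of_hasDerivAt hint hii
  simp only [zero_smul, add_zero, one_smul] at heq
  have hzd : z + d = w := by rw [hd]; abel
  rw [hzd] at heq
  have hmono : ∫ t in (0:ℝ)..1, ⟪f' (z + t • d), d⟫
      ≤ ∫ t in (0:ℝ)..1, (⟪f' z, d⟫ + L * ‖d‖^2 * t) := by
    apply intervalIntegral.integral_mono_on zero_le_one hii
    · apply Continuous.intervalIntegrable
      continuity
    · intro t ht
      have h1 : ⟪f' (z + t • d), d⟫ - ⟪f' z, d⟫ = ⟪f' (z + t • d) - f' z, d⟫ := by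
        rw [inner_sub_left]
      have h2 : ⟪f' (z + t • d) - f' z, d⟫ ≤ ‖f' (z + t • d) - f' z‖ * ‖d‖ :=
        real_inner_le_norm _ _
      have h3 : ‖f' (z + t • d) - f' z‖ ≤ L * ‖t • d‖ := by
        have := hlip (z + t • d) z
        simpa using this
      have h4 : ‖t • d‖ = t * ‖d‖ := by
        rw [norm_smul, Real.norm_eq_abs, abs_of_nonneg ht.1]
      have h5 : ‖f' (z + t • d) - f' z‖ * ‖d‖ ≤ L * ‖t • d‖ * ‖d‖ :=
        mul_le_mul_of_nonneg_right h3 (norm_nonneg d)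
      rw [h4] at h5
      have h6 : L * (t * ‖d‖) * ‖d‖ = L * ‖d‖^2 * t := by ring
      linarith
  have hrhs : ∫ t in (0:ℝ)..1, (⟪f' z, d⟫ + L * ‖d‖^2 * t)
      = ⟪f' z, d⟫ + L/2 * ‖d‖^2 := by
    rw [intervalIntegral.integral_add (by apply Continuous.intervalIntegrable; continuity)
      (by apply Continuous.intervalIntegrable; continuity)]
    rw [intervalIntegral.integral_const]
    rw [intervalIntegral.integral_const_mul, integral_id]
    simp; ring
  rw [heq, hrhs] at hmono
  linarith

set_option maxHeartbeats 1000000 in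
lemma per_i {ι κ σ : Type*} [Fintype ι] [Fintype κ] [Fintype σ] [DecidableEq κ]
    (A : Matrix ι κ ℝ) (B : Matrix ι σ ℝ) (bb : EuclideanSpace ℝ ι)
    (γ c L : ℝ) (hγ : 0 < γ) (hc : 0 < c) (h1 : c * (L + γ * spec A ^ 2) ≤ 1)
    (xk xp xsv : EuclideanSpace ℝ κ) (yk yp ysv : EuclideanSpace ℝ σ)
    (lamk lamp l : EuclideanSpace ℝ ι)
    (hfeas : mvec A xsv + mvec B ysv - bb = 0)
    (hlam : lamp = lamk + γ • (mvec A xp + mvec B yp - bb)) :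
    ⟪lamk + γ • (mvec A xk + mvec B yk - bb), mvec A (xsv - xp)⟫
      + ⟪lamp, mvec B (ysv - yp)⟫ + ⟪l, mvec A xp + mvec B yp - bb⟫
      + c⁻¹ * ⟪xsv - xp, xp - xk⟫ + L/2 * ‖xp - xk‖^2
    ≤ ((2*γ)⁻¹*‖l - lamk‖^2 + (2*c)⁻¹*(‖xsv - xk‖^2 - γ*c*‖mvec A (xsv - xk)‖^2)
        + γ/2*‖mvec B (ysv - yk)‖^2)
      - ((2*γ)⁻¹*‖l - lamp‖^2 + (2*c)⁻¹*(‖xsv - xp‖^2 - γ*c*‖mvec A (xsv - xp)‖^2)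
        + γ/2*‖mvec B (ysv - yp)‖^2) := by
  have hcne : c ≠ 0 := hc.ne'
  have hγne : γ ≠ 0 := hγ.ne'
  have hG : ∀ v : EuclideanSpace ℝ κ, (2*c)⁻¹*(‖v‖^2 - γ*c*‖mvec A v‖^2)
      = 2⁻¹*c⁻¹*‖v‖^2 - γ/2*‖mvec A v‖^2 := by
    intro v; field_simp
  rw [hG, hG]
  simp only [mul_inv]
  set R : EuclideanSpace ℝ ι := mvec A xp + mvec B yp - bb with hR
  have hhat : lamk + γ • (mvec A xk + mvec B yk - bb)
      = lamp + γ • (mvec A (xk - xp) + mvec B (yk - yp)) := by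
    rw [hlam, mvec_sub', mvec_sub']; module
  have g1 : ⟪lamk + γ • (mvec A xk + mvec B yk - bb), mvec A (xsv - xp)⟫
      = ⟪lamp, mvec A (xsv - xp)⟫ + γ * ⟪mvec A (xk - xp), mvec A (xsv - xp)⟫
        + γ * ⟪mvec B (yk - yp), mvec A (xsv - xp)⟫ := by
    rw [hhat, inner_add_left, real_inner_smul_left, inner_add_left]; ring
  have hsum : mvec A (xsv - xp) + mvec B (ysv - yp) = -R := by
    rw [mvec_sub', mvec_sub']
    have h := hfeas
    rw [hR]
    have : mvec A xsv - mvec A xp + (mvec B ysv - mvec B yp)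
        = (mvec A xsv + mvec B ysv - bb) - (mvec A xp + mvec B yp - bb) := by abel
    rw [this, h]; abel
  have g2 : ⟪lamp, mvec A (xsv - xp)⟫ + ⟪lamp, mvec B (ysv - yp)⟫ = - ⟪lamp, R⟫ := by
    rw [← inner_add_right, hsum, inner_neg_right]
  have hlamdiff : lamp - lamk = γ • R := by rw [hlam]; abel
  have hRinv : R = γ⁻¹ • (lamp - lamk) := by
    rw [hlamdiff, smul_smul, inv_mul_cancel₀ hγne, one_smul]
  have g3 : ⟪l, R⟫ - ⟪lamp, R⟫
      = 2⁻¹*γ⁻¹*(‖l - lamk‖^2 - ‖l - lamp‖^2 - ‖lamp - lamk‖^2) := by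
    rw [← inner_sub_left, hRinv, real_inner_smul_right]
    have hd := sq_norm_decomp l lamp lamk
    linear_combination -2⁻¹*γ⁻¹ * hd
  have g4 : γ * ⟪mvec A (xk - xp), mvec A (xsv - xp)⟫
      = γ/2*‖mvec A (xk - xp)‖^2 + γ/2*‖mvec A (xsv - xp)‖^2
        - γ/2*‖mvec A (xsv - xk)‖^2 := by
    have h2 := two_inner_eq (mvec A (xk - xp)) (mvec A (xsv - xp))
    have hdiff : mvec A (xk - xp) - mvec A (xsv - xp) = -(mvec A (xsv - xk)) := by
      rw [mvec_sub', mvec_sub', mvec_sub']; abel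
    rw [hdiff, norm_neg] at h2
    linear_combination γ/2 * h2
  have g5 : γ * ⟪mvec B (yk - yp), mvec A (xsv - xp)⟫
      = - ⟪mvec B (yk - yp), lamp - lamk⟫
        - (γ/2*‖mvec B (ysv - yp)‖^2 + γ/2*‖mvec B (yk - yp)‖^2
           - γ/2*‖mvec B (ysv - yk)‖^2) := by
    have hu : mvec A (xsv - xp) = -R - mvec B (ysv - yp) := by
      have := hsum; linear_combination (norm := module) this
    have hbr : γ * ⟪mvec B (yk - yp), R⟫ = ⟪mvec B (yk - yp), lamp - lamk⟫ := by
      rw [hlamdiff, real_inner_smul_right]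
    have h2 := two_inner_eq (mvec B (yk - yp)) (mvec B (ysv - yp))
    have hdiff : mvec B (yk - yp) - mvec B (ysv - yp) = -(mvec B (ysv - yk)) := by
      rw [mvec_sub', mvec_sub', mvec_sub']; abel
    rw [hdiff, norm_neg] at h2
    rw [hu, inner_sub_right, inner_neg_right]
    linear_combination - hbr - γ/2 * h2
  have g6 : 0 ≤ 2⁻¹*γ⁻¹*‖lamp - lamk‖^2 + ⟪mvec B (yk - yp), lamp - lamk⟫
      + γ/2*‖mvec B (yk - yp)‖^2 := by
    have key : (0:ℝ) ≤ 2⁻¹*γ⁻¹*‖(lamp - lamk) + γ • mvec B (yk - yp)‖^2 := by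
      have h2γ : (0:ℝ) ≤ 2⁻¹*γ⁻¹ := by positivity
      positivity
    have hexp : ‖(lamp - lamk) + γ • mvec B (yk - yp)‖^2
        = ‖lamp - lamk‖^2 + 2*(γ*⟪lamp - lamk, mvec B (yk - yp)⟫)
          + γ^2*‖mvec B (yk - yp)‖^2 := by
      rw [norm_add_sq_real, real_inner_smul_right, norm_smul, Real.norm_eq_abs, mul_pow, sq_abs]
    rw [hexp] at key
    rw [real_inner_comm]
    have hexpand : 2⁻¹*γ⁻¹*(‖lamp - lamk‖^2 + 2*(γ*⟪lamp - lamk, mvec B (yk - yp)⟫)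
        + γ^2*‖mvec B (yk - yp)‖^2)
        = 2⁻¹*γ⁻¹*‖lamp - lamk‖^2 + ⟪lamp - lamk, mvec B (yk - yp)⟫
          + γ/2*‖mvec B (yk - yp)‖^2 := by
      field_simp
    linarith [key, hexpand.symm.le, hexpand.le]
  have g7 : γ/2*‖mvec A (xk - xp)‖^2 ≤ γ/2*(spec A^2 * ‖xp - xk‖^2) := by
    have := sq_norm_mvec_le A (xk - xp)
    rw [norm_sub_rev] at this
    nlinarith [hγ]
  have g8 : L/2*‖xp - xk‖^2 + γ/2*(spec A^2 * ‖xp - xk‖^2) ≤ 2⁻¹*c⁻¹*‖xp - xk‖^2 := by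
    have hinv : L + γ * spec A^2 ≤ c⁻¹ := by
      rw [← one_div]
      exact (le_div_iff₀ hc).mpr (by linarith)
    nlinarith [sq_nonneg ‖xp - xk‖]
  have g9 : c⁻¹ * ⟪xsv - xp, xp - xk⟫
      = 2⁻¹*c⁻¹*(‖xsv - xk‖^2 - ‖xsv - xp‖^2 - ‖xp - xk‖^2) := by
    have hd := sq_norm_decomp xsv xp xk
    linear_combination -2⁻¹*c⁻¹ * hd
  linarith [g1, g2, g3, g4, g5, g6, g7, g8, g9]

end PGADMMAux

end AuxPGADMM

set_option maxHeartbeats 2000000 in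
/-- Theorem `lem:ergodic`, deterministic case, bound (15):
the ergodic suboptimality/infeasibility bound for PG-ADMM with constant step sizes
`c_i ∈ (0, 1/(L_i + γ_i‖A_i‖²)]`.  Extended-real-valued proper closed convex functions
`ξ_i` and `g` are modelled as real-valued convex functions on their (closed, nonempty,
convex) effective domains `domξ i` and `domg`. -/
theorem pg_admm_ergodic_bound
    {N : ℕ} {n m : Fin N → ℕ} {ny : ℕ}
    (A : ∀ i, Matrix (Fin (m i)) (Fin (n i)) ℝ)
    (B : ∀ i, Matrix (Fin (m i)) (Fin ny) ℝ)
    (b : ∀ i, EuclideanSpace ℝ (Fin (m i)))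
    (ξ : ∀ i, EuclideanSpace ℝ (Fin (n i)) → ℝ)
    (domξ : ∀ i, Set (EuclideanSpace ℝ (Fin (n i))))
    (f : ∀ i, EuclideanSpace ℝ (Fin (n i)) → ℝ)
    (f' : ∀ i, EuclideanSpace ℝ (Fin (n i)) → EuclideanSpace ℝ (Fin (n i)))
    (L : Fin N → ℝ)
    (g : EuclideanSpace ℝ (Fin ny) → ℝ)
    (domg : Set (EuclideanSpace ℝ (Fin ny)))
    (γ : Fin N → ℝ) (c : Fin N → ℝ)
    (x : ℕ → ∀ i, EuclideanSpace ℝ (Fin (n i)))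
    (y : ℕ → EuclideanSpace ℝ (Fin ny))
    (lam : ℕ → ∀ i, EuclideanSpace ℝ (Fin (m i)))
    (xbar : ℕ → ∀ i, EuclideanSpace ℝ (Fin (n i)))
    (ybar : ℕ → EuclideanSpace ℝ (Fin ny))
    -- ξ_i proper closed convex
    (hξconv : ∀ i, ConvexOn ℝ (domξ i) (ξ i))
    (hξlsc : ∀ i, LowerSemicontinuousOn (ξ i) (domξ i))
    (hξcl : ∀ i, IsClosed (domξ i))
    (hξne : ∀ i, (domξ i).Nonempty)
    -- f_i convex with L_i-Lipschitz gradient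
    (hfconv : ∀ i, ConvexOn ℝ Set.univ (f i))
    (hfgrad : ∀ i z, HasGradientAt (f i) (f' i z) z)
    (hfLip : ∀ i z w, ‖f' i z - f' i w‖ ≤ L i * ‖z - w‖)
    -- g proper closed convex
    (hgconv : ConvexOn ℝ domg g)
    (hglsc : LowerSemicontinuousOn g domg)
    (hgcl : IsClosed domg)
    (hgne : domg.Nonempty)
    -- parameters
    (hγ : ∀ i, 0 < γ i)
    (hcpos : ∀ i, 0 < c i)
    (hcle : ∀ i, c i ≤ (L i + γ i * spec (A i) ^ 2)⁻¹)
    -- initial condition: −Σ Bᵢᵀ λᵢ⁰ ∈ ∂g(y⁰)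
    (hinit : y 0 ∈ domg ∧ ∀ z ∈ domg,
      g (y 0) + ⟪-(∑ i, mvec (B i)ᵀ (lam 0 i)), z - y 0⟫ ≤ g z)
    -- PG-ADMM x-update (proximal gradient step, δ_i^k = 0)
    (hxup : ∀ k i, x (k+1) i ∈ domξ i ∧ ∀ z ∈ domξ i,
      ξ i (x (k+1) i) + (2 * c i)⁻¹ *
        ‖x (k+1) i - (x k i - c i • (f' i (x k i) +
          mvec (A i)ᵀ (lam k i + γ i • (mvec (A i) (x k i) + mvec (B i) (y k) - b i))))‖ ^ 2
      ≤ ξ i z + (2 * c i)⁻¹ *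
        ‖z - (x k i - c i • (f' i (x k i) +
          mvec (A i)ᵀ (lam k i + γ i • (mvec (A i) (x k i) + mvec (B i) (y k) - b i))))‖ ^ 2)
    -- PG-ADMM y-update
    (hyup : ∀ k, y (k+1) ∈ domg ∧ ∀ z ∈ domg,
      g (y (k+1)) + ∑ i, γ i / 2 *
        ‖mvec (A i) (x (k+1) i) + mvec (B i) (y (k+1)) - b i + (γ i)⁻¹ • lam k i‖ ^ 2
      ≤ g z + ∑ i, γ i / 2 *
        ‖mvec (A i) (x (k+1) i) + mvec (B i) z - b i + (γ i)⁻¹ • lam k i‖ ^ 2)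
    -- PG-ADMM dual update
    (hlamup : ∀ k i, lam (k+1) i
      = lam k i + γ i • (mvec (A i) (x (k+1) i) + mvec (B i) (y (k+1)) - b i))
    -- ergodic averages
    (hxbar : ∀ t i, xbar t i = (t : ℝ)⁻¹ • ∑ k ∈ Finset.Icc 1 t, x k i)
    (hybar : ∀ t, ybar t = (t : ℝ)⁻¹ • ∑ k ∈ Finset.Icc 1 t, y k)
    -- (x*, y*, λ*) ∈ χ*, a saddle point of the Lagrangian
    (xs : ∀ i, EuclideanSpace ℝ (Fin (n i)))
    (ys : EuclideanSpace ℝ (Fin ny))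
    (ls : ∀ i, EuclideanSpace ℝ (Fin (m i)))
    (hsad₁ : ∀ i, xs i ∈ domξ i) (hsad₂ : ys ∈ domg)
    (hsad₃ : ∀ (x' : ∀ i, EuclideanSpace ℝ (Fin (n i))) (y' : EuclideanSpace ℝ (Fin ny)),
      (∀ i, x' i ∈ domξ i) → y' ∈ domg →
      g ys + ∑ i, (ξ i (xs i) + f i (xs i))
        + ∑ i, ⟪ls i, mvec (A i) (xs i) + mvec (B i) ys - b i⟫
      ≤ g y' + ∑ i, (ξ i (x' i) + f i (x' i))
        + ∑ i, ⟪ls i, mvec (A i) (x' i) + mvec (B i) y' - b i⟫)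
    (hsad₄ : ∀ l : ∀ i, EuclideanSpace ℝ (Fin (m i)),
      g ys + ∑ i, (ξ i (xs i) + f i (xs i))
        + ∑ i, ⟪l i, mvec (A i) (xs i) + mvec (B i) ys - b i⟫
      ≤ g ys + ∑ i, (ξ i (xs i) + f i (xs i))
        + ∑ i, ⟪ls i, mvec (A i) (xs i) + mvec (B i) ys - b i⟫) :
    ∀ t : ℕ, 1 ≤ t → ∀ l : ∀ i, EuclideanSpace ℝ (Fin (m i)),
      (g (ybar t) + ∑ i, (ξ i (xbar t i) + f i (xbar t i)))
        - (g ys + ∑ i, (ξ i (xs i) + f i (xs i)))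
        + ∑ i, ⟪l i, mvec (A i) (xbar t i) + mvec (B i) (ybar t) - b i⟫
      ≤ (2 * (t:ℝ))⁻¹ * ∑ i, ((γ i)⁻¹ * ‖l i - lam 0 i‖ ^ 2
          + (c i)⁻¹ * qnorm (1 - (γ i * c i) • ((A i)ᵀ * A i)) (xs i - x 0 i))
        + (2 * (t:ℝ))⁻¹ * qnorm (∑ i, γ i • ((B i)ᵀ * B i)) (ys - y 0) := by
  intro t ht l
  -- basic parameter facts
  have hbase : ∀ i, 0 < L i + γ i * spec (A i)^2 := by
    intro i
    by_contra hcon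
    push_neg at hcon
    have h0 : (L i + γ i * spec (A i)^2)⁻¹ ≤ 0 := inv_nonpos.mpr hcon
    linarith [lt_of_lt_of_le (hcpos i) (hcle i)]
  have h1 : ∀ i, c i * (L i + γ i * spec (A i) ^ 2) ≤ 1 := by
    intro i
    have hb := hbase i
    calc c i * (L i + γ i * spec (A i)^2)
        ≤ (L i + γ i * spec (A i)^2)⁻¹ * (L i + γ i * spec (A i)^2) :=
          mul_le_mul_of_nonneg_right (hcle i) hb.le
      _ = 1 := inv_mul_cancel₀ hb.ne'
  -- feasibility of the saddle point
  have hfeas : ∀ i, mvec (A i) (xs i) + mvec (B i) ys - b i = 0 := by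
    intro i
    have hs := hsad₄ (fun j => ls j + (mvec (A j) (xs j) + mvec (B j) ys - b j))
    simp only [inner_add_left, Finset.sum_add_distrib] at hs
    have hsum0 : ∑ j, ⟪mvec (A j) (xs j) + mvec (B j) ys - b j,
        mvec (A j) (xs j) + mvec (B j) ys - b j⟫ ≤ 0 := by linarith
    have hz := (Finset.sum_eq_zero_iff_of_nonneg
      (fun j _ => real_inner_self_nonneg)).mp
      (le_antisymm hsum0 (Finset.sum_nonneg fun j _ => real_inner_self_nonneg))
    exact inner_self_eq_zero.mp (hz i (Finset.mem_univ i))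
  -- one-step inequality from the x-update
  have hX : ∀ k i, ξ i (x (k+1) i) + f i (x (k+1) i) - (ξ i (xs i) + f i (xs i))
      ≤ ⟪lam k i + γ i • (mvec (A i) (x k i) + mvec (B i) (y k) - b i),
          mvec (A i) (xs i - x (k+1) i)⟫
        + (c i)⁻¹ * ⟪xs i - x (k+1) i, x (k+1) i - x k i⟫
        + L i/2 * ‖x (k+1) i - x k i‖^2 := by
    intro k i
    have hcne : c i ≠ 0 := (hcpos i).ne'
    obtain ⟨hmem, hmin⟩ := hxup k i
    set lamhat := lam k i + γ i • (mvec (A i) (x k i) + mvec (B i) (y k) - b i) with hlamhat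
    set D := f' i (x k i) + mvec (A i)ᵀ lamhat with hDdef
    set P := x k i - c i • D with hPdef
    have hq : ∀ a ∈ domξ i, ∀ b' ∈ domξ i, ∀ s : ℝ, 0 ≤ s → s ≤ 1 →
        (fun z => (2 * c i)⁻¹ * ‖z - P‖^2) ((1-s)•a + s•b')
        = (1-s) * ((fun z => (2 * c i)⁻¹ * ‖z - P‖^2) a)
          + s * ((fun z => (2 * c i)⁻¹ * ‖z - P‖^2) b')
          - s*(1-s)/2 * ((fun a b' => (c i)⁻¹ * ‖a - b'‖^2) a b') := by
      intro a _ b' _ s _ _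
      simp only
      have hcomb : ((1-s)•a + s•b') - P = (1-s)•(a-P) + s•(b'-P) := by module
      rw [hcomb, PGADMMAux.sq_norm_comb]
      have habs : (a - P) - (b' - P) = a - b' := by abel
      rw [habs, mul_inv]
      ring
    have h3p := PGADMMAux.strong_min (q := fun z => (2 * c i)⁻¹ * ‖z - P‖^2)
      (R := fun a b' => (c i)⁻¹ * ‖a - b'‖^2) (hξconv i) hq
      (fun a b' => mul_nonneg (inv_nonneg.mpr (hcpos i).le) (sq_nonneg _))
      hmem hmin (xs i) (hsad₁ i)
    rw [mul_inv, norm_sub_rev (x (k+1) i) (xs i)] at h3p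
    have hd := PGADMMAux.sq_norm_decomp (xs i) (x (k+1) i) P
    have hd2 : 2⁻¹*(c i)⁻¹*‖xs i - P‖^2
        = 2⁻¹*(c i)⁻¹*‖xs i - x (k+1) i‖^2
          + (c i)⁻¹*⟪xs i - x (k+1) i, x (k+1) i - P⟫
          + 2⁻¹*(c i)⁻¹*‖x (k+1) i - P‖^2 := by
      linear_combination 2⁻¹*(c i)⁻¹ * hd
    have hξb : ξ i (x (k+1) i) - ξ i (xs i)
        ≤ (c i)⁻¹*⟪xs i - x (k+1) i, x (k+1) i - P⟫ := by
      linarith [h3p, hd2]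
    have hPdec : x (k+1) i - P = (x (k+1) i - x k i) + c i • D := by
      rw [hPdef]; module
    have hip : (c i)⁻¹*⟪xs i - x (k+1) i, x (k+1) i - P⟫
        = (c i)⁻¹*⟪xs i - x (k+1) i, x (k+1) i - x k i⟫ + ⟪xs i - x (k+1) i, D⟫ := by
      rw [hPdec, inner_add_right, real_inner_smul_right, mul_add, ← mul_assoc,
        inv_mul_cancel₀ hcne, one_mul]
    have hDsplit : ⟪xs i - x (k+1) i, D⟫
        = ⟪xs i - x (k+1) i, f' i (x k i)⟫ + ⟪lamhat, mvec (A i) (xs i - x (k+1) i)⟫ := by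
      rw [hDdef, inner_add_right]
      congr 1
      rw [PGADMMAux.inner_mvec' (A i)ᵀ, Matrix.transpose_transpose, real_inner_comm]
    have hdesc := PGADMMAux.descent_lemma (hfgrad i) (hfLip i) (x k i) (x (k+1) i)
    have hcvx := PGADMMAux.convex_grad_ineq (hfconv i) (hfgrad i) (x k i) (xs i)
    have hfi : ⟪xs i - x (k+1) i, f' i (x k i)⟫
        = ⟪f' i (x k i), xs i - x k i⟫ - ⟪f' i (x k i), x (k+1) i - x k i⟫ := by
      rw [real_inner_comm, ← inner_sub_right]
      congr 1
      abel
    linarith [hξb, hip, hDsplit, hdesc, hcvx, hfi]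
  -- one-step inequality from the y-update
  have hY : ∀ k, g (y (k+1)) - g ys
      ≤ ∑ i, ⟪lam (k+1) i, mvec (B i) (ys - y (k+1))⟫ := by
    intro k
    obtain ⟨hymem, hymin⟩ := hyup k
    have hq : ∀ a ∈ domg, ∀ b' ∈ domg, ∀ s : ℝ, 0 ≤ s → s ≤ 1 →
        (fun z => ∑ i, γ i / 2 * ‖mvec (A i) (x (k+1) i) + mvec (B i) z - b i
          + (γ i)⁻¹ • lam k i‖^2) ((1-s)•a + s•b')
        = (1-s) * ((fun z => ∑ i, γ i / 2 * ‖mvec (A i) (x (k+1) i) + mvec (B i) z - b i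
            + (γ i)⁻¹ • lam k i‖^2) a)
          + s * ((fun z => ∑ i, γ i / 2 * ‖mvec (A i) (x (k+1) i) + mvec (B i) z - b i
            + (γ i)⁻¹ • lam k i‖^2) b')
          - s*(1-s)/2 * ((fun a b' => ∑ i, γ i * ‖mvec (B i) (a - b')‖^2) a b') := by
      intro a _ b' _ s _ _
      simp only
      have hper : ∀ i : Fin N, γ i / 2 * ‖mvec (A i) (x (k+1) i) + mvec (B i) ((1-s)•a + s•b')
            - b i + (γ i)⁻¹ • lam k i‖^2
          = (1-s) * (γ i / 2 * ‖mvec (A i) (x (k+1) i) + mvec (B i) a - b i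
              + (γ i)⁻¹ • lam k i‖^2)
            + s * (γ i / 2 * ‖mvec (A i) (x (k+1) i) + mvec (B i) b' - b i
              + (γ i)⁻¹ • lam k i‖^2)
            - s*(1-s)/2 * (γ i * ‖mvec (B i) (a - b')‖^2) := by
        intro i
        have hBcomb : mvec (A i) (x (k+1) i) + mvec (B i) ((1-s)•a + s•b') - b i
              + (γ i)⁻¹ • lam k i
            = (1-s)•(mvec (A i) (x (k+1) i) + mvec (B i) a - b i + (γ i)⁻¹ • lam k i)
              + s•(mvec (A i) (x (k+1) i) + mvec (B i) b' - b i + (γ i)⁻¹ • lam k i) := by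
          rw [PGADMMAux.mvec_add', PGADMMAux.mvec_smul', PGADMMAux.mvec_smul']
          module
        rw [hBcomb, PGADMMAux.sq_norm_comb]
        have hdv : (mvec (A i) (x (k+1) i) + mvec (B i) a - b i + (γ i)⁻¹ • lam k i)
            - (mvec (A i) (x (k+1) i) + mvec (B i) b' - b i + (γ i)⁻¹ • lam k i)
            = mvec (B i) (a - b') := by
          rw [PGADMMAux.mvec_sub']; abel
        rw [hdv]; ring
      rw [Finset.sum_congr rfl (fun i _ => hper i), Finset.sum_sub_distrib,
        Finset.sum_add_distrib, ← Finset.mul_sum, ← Finset.mul_sum, ← Finset.mul_sum]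
    have h3p := PGADMMAux.strong_min
      (q := fun z => ∑ i, γ i / 2 * ‖mvec (A i) (x (k+1) i) + mvec (B i) z - b i
        + (γ i)⁻¹ • lam k i‖^2)
      (R := fun a b' => ∑ i, γ i * ‖mvec (B i) (a - b')‖^2) hgconv hq
      (fun a b' => Finset.sum_nonneg fun i _ => mul_nonneg (hγ i).le (sq_nonneg _))
      hymem hymin ys hsad₂
    have hqys : ∀ i : Fin N, γ i / 2 * ‖mvec (A i) (x (k+1) i) + mvec (B i) ys - b i
          + (γ i)⁻¹ • lam k i‖^2
        = γ i / 2 * ‖mvec (A i) (x (k+1) i) + mvec (B i) (y (k+1)) - b i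
            + (γ i)⁻¹ • lam k i‖^2
          + ⟪lam (k+1) i, mvec (B i) (ys - y (k+1))⟫
          + γ i / 2 * ‖mvec (B i) (ys - y (k+1))‖^2 := by
      intro i
      have hvec : mvec (A i) (x (k+1) i) + mvec (B i) ys - b i + (γ i)⁻¹ • lam k i
          = (mvec (A i) (x (k+1) i) + mvec (B i) (y (k+1)) - b i + (γ i)⁻¹ • lam k i)
            + mvec (B i) (ys - y (k+1)) := by
        rw [PGADMMAux.mvec_sub']; module
      rw [hvec, norm_add_sq_real]
      have hlm : γ i • (mvec (A i) (x (k+1) i) + mvec (B i) (y (k+1)) - b i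
            + (γ i)⁻¹ • lam k i) = lam (k+1) i := by
        rw [hlamup k i, smul_add, smul_smul, mul_inv_cancel₀ (hγ i).ne', one_smul]
        abel
      have hinn : γ i * ⟪mvec (A i) (x (k+1) i) + mvec (B i) (y (k+1)) - b i
            + (γ i)⁻¹ • lam k i, mvec (B i) (ys - y (k+1))⟫
          = ⟪lam (k+1) i, mvec (B i) (ys - y (k+1))⟫ := by
        rw [← real_inner_smul_left, hlm]
      linear_combination hinn
    have hRs : (∑ i, γ i * ‖mvec (B i) (y (k+1) - ys)‖^2)
        = ∑ i, γ i * ‖mvec (B i) (ys - y (k+1))‖^2 := by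
      refine Finset.sum_congr rfl fun i _ => ?_
      have : mvec (B i) (y (k+1) - ys) = -(mvec (B i) (ys - y (k+1))) := by
        rw [PGADMMAux.mvec_sub', PGADMMAux.mvec_sub']; abel
      rw [this, norm_neg]
    rw [Finset.sum_congr rfl (fun i _ => hqys i), hRs, Finset.sum_add_distrib,
      Finset.sum_add_distrib] at h3p
    have hdiv : (∑ i, γ i * ‖mvec (B i) (ys - y (k+1))‖^2)/2
        = ∑ i, γ i/2 * ‖mvec (B i) (ys - y (k+1))‖^2 := by
      rw [Finset.sum_div]
      exact Finset.sum_congr rfl fun i _ => by ring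
    linarith [h3p, hdiv]
  -- the Lyapunov function
  set Φf : Fin N → ℕ → ℝ := fun i k =>
    (2*γ i)⁻¹*‖l i - lam k i‖^2
      + (2*c i)⁻¹*(‖xs i - x k i‖^2 - γ i * c i * ‖mvec (A i) (xs i - x k i)‖^2)
      + γ i/2*‖mvec (B i) (ys - y k)‖^2 with hΦf
  -- per-step master inequality
  have hstep : ∀ k : ℕ,
      (g (y (k+1)) + ∑ i, (ξ i (x (k+1) i) + f i (x (k+1) i)))
        - (g ys + ∑ i, (ξ i (xs i) + f i (xs i)))
        + ∑ i, ⟪l i, mvec (A i) (x (k+1) i) + mvec (B i) (y (k+1)) - b i⟫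
      ≤ (∑ i, Φf i k) - (∑ i, Φf i (k+1)) := by
    intro k
    have hper : ∀ i : Fin N,
        (ξ i (x (k+1) i) + f i (x (k+1) i) - (ξ i (xs i) + f i (xs i)))
          + ⟪lam (k+1) i, mvec (B i) (ys - y (k+1))⟫
          + ⟪l i, mvec (A i) (x (k+1) i) + mvec (B i) (y (k+1)) - b i⟫
        ≤ Φf i k - Φf i (k+1) := by
      intro i
      have hpi := PGADMMAux.per_i (A i) (B i) (b i) (γ i) (c i) (L i) (hγ i) (hcpos i)
        (h1 i) (x k i) (x (k+1) i) (xs i) (y k) (y (k+1)) ys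
        (lam k i) (lam (k+1) i) (l i) (hfeas i) (hlamup k i)
      have hx := hX k i
      simp only [hΦf]
      linarith [hpi, hx]
    have hsum := Finset.sum_le_sum (fun i (_ : i ∈ Finset.univ) => hper i)
    rw [Finset.sum_add_distrib, Finset.sum_add_distrib, Finset.sum_sub_distrib,
      Finset.sum_sub_distrib] at hsum
    have hy := hY k
    linarith [hsum, hy]
  -- telescoping
  have htel : ∀ T : ℕ, (∑ k ∈ Finset.Icc 1 T,
      ((g (y k) + ∑ i, (ξ i (x k i) + f i (x k i)))
        - (g ys + ∑ i, (ξ i (xs i) + f i (xs i)))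
        + ∑ i, ⟪l i, mvec (A i) (x k i) + mvec (B i) (y k) - b i⟫))
      ≤ (∑ i, Φf i 0) - (∑ i, Φf i T) := by
    intro T
    induction T with
    | zero => simp
    | succ T ih =>
        rw [Finset.sum_Icc_succ_top (Nat.le_add_left 1 T)]
        have := hstep T
        linarith
  -- nonnegativity of the Lyapunov function
  have hGnn : ∀ i (v : EuclideanSpace ℝ (Fin (n i))),
      0 ≤ ‖v‖^2 - γ i * c i * ‖mvec (A i) v‖^2 := by
    intro i v
    by_cases hv : v = 0
    · simp [hv, PGADMMAux.mvec_zero']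
    · have hvpos : 0 < ‖v‖ := norm_pos_iff.mpr hv
      have hLi : 0 ≤ L i := by
        have h := hfLip i v 0
        rw [sub_zero] at h
        nlinarith [norm_nonneg (f' i v - f' i 0)]
      have hsq := PGADMMAux.sq_norm_mvec_le (A i) v
      have hbound : γ i * c i * spec (A i)^2 ≤ 1 := by
        nlinarith [h1 i, mul_nonneg (hcpos i).le hLi]
      have hint1 : 0 ≤ γ i * c i * (spec (A i)^2 * ‖v‖^2 - ‖mvec (A i) v‖^2) :=
        mul_nonneg (mul_nonneg (hγ i).le (hcpos i).le) (by linarith)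
      have hint2 : 0 ≤ (1 - γ i * c i * spec (A i)^2) * ‖v‖^2 :=
        mul_nonneg (by linarith) (sq_nonneg _)
      nlinarith [hint1, hint2]
  have hΦnn : ∀ T : ℕ, 0 ≤ ∑ i, Φf i T := by
    intro T
    refine Finset.sum_nonneg fun i _ => ?_
    simp only [hΦf]
    have h1' : (0:ℝ) ≤ (2*γ i)⁻¹*‖l i - lam T i‖^2 :=
      mul_nonneg (inv_nonneg.mpr (by nlinarith [hγ i])) (pow_nonneg (norm_nonneg _) 2)
    have h2' : (0:ℝ) ≤ (2*c i)⁻¹*(‖xs i - x T i‖^2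
        - γ i * c i * ‖mvec (A i) (xs i - x T i)‖^2) :=
      mul_nonneg (inv_nonneg.mpr (by nlinarith [hcpos i])) (hGnn i _)
    have h3' : (0:ℝ) ≤ γ i/2*‖mvec (B i) (ys - y T)‖^2 :=
      mul_nonneg (by nlinarith [hγ i]) (pow_nonneg (norm_nonneg _) 2)
    linarith
  -- Jensen step
  have hT1 : (1:ℝ) ≤ (t:ℝ) := by exact_mod_cast ht
  have hTpos : (0:ℝ) < (t:ℝ) := by linarith
  have hcard : (Finset.Icc 1 t).card = t := by rw [Nat.card_Icc]; omega
  have hwsum : ∑ _k ∈ Finset.Icc 1 t, (t:ℝ)⁻¹ = 1 := by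
    rw [Finset.sum_const, hcard, nsmul_eq_mul]
    field_simp
  have hJg : g (ybar t) ≤ ∑ k ∈ Finset.Icc 1 t, (t:ℝ)⁻¹ * g (y k) := by
    have hyb : ybar t = ∑ k ∈ Finset.Icc 1 t, (t:ℝ)⁻¹ • y k := by
      rw [hybar t, Finset.smul_sum]
    rw [hyb]
    refine hgconv.map_sum_le (fun k _ => inv_nonneg.mpr hTpos.le) hwsum (fun k hk => ?_)
    obtain ⟨j, rfl⟩ : ∃ j, k = j+1 :=
      ⟨k-1, by have := (Finset.mem_Icc.mp hk).1; omega⟩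
    exact (hyup j).1
  have hJξ : ∀ i, ξ i (xbar t i) ≤ ∑ k ∈ Finset.Icc 1 t, (t:ℝ)⁻¹ * ξ i (x k i) := by
    intro i
    have hxb : xbar t i = ∑ k ∈ Finset.Icc 1 t, (t:ℝ)⁻¹ • x k i := by
      rw [hxbar t i, Finset.smul_sum]
    rw [hxb]
    refine (hξconv i).map_sum_le (fun k _ => inv_nonneg.mpr hTpos.le) hwsum (fun k hk => ?_)
    obtain ⟨j, rfl⟩ : ∃ j, k = j+1 :=
      ⟨k-1, by have := (Finset.mem_Icc.mp hk).1; omega⟩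
    exact (hxup j i).1
  have hJf : ∀ i, f i (xbar t i) ≤ ∑ k ∈ Finset.Icc 1 t, (t:ℝ)⁻¹ * f i (x k i) := by
    intro i
    have hxb : xbar t i = ∑ k ∈ Finset.Icc 1 t, (t:ℝ)⁻¹ • x k i := by
      rw [hxbar t i, Finset.smul_sum]
    rw [hxb]
    exact (hfconv i).map_sum_le (fun k _ => inv_nonneg.mpr hTpos.le) hwsum
      (fun k _ => Set.mem_univ _)
  have hJlin : ∀ i, ⟪l i, mvec (A i) (xbar t i) + mvec (B i) (ybar t) - b i⟫
      = ∑ k ∈ Finset.Icc 1 t,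
          (t:ℝ)⁻¹ * ⟪l i, mvec (A i) (x k i) + mvec (B i) (y k) - b i⟫ := by
    intro i
    have hvec : mvec (A i) (xbar t i) + mvec (B i) (ybar t) - b i
        = ∑ k ∈ Finset.Icc 1 t,
            (t:ℝ)⁻¹ • (mvec (A i) (x k i) + mvec (B i) (y k) - b i) := by
      rw [hxbar t i, hybar t, PGADMMAux.mvec_smul', PGADMMAux.mvec_smul',
        PGADMMAux.mvec_sum', PGADMMAux.mvec_sum']
      rw [eq_comm]
      calc ∑ k ∈ Finset.Icc 1 t,
            (t:ℝ)⁻¹ • (mvec (A i) (x k i) + mvec (B i) (y k) - b i)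
          = ∑ k ∈ Finset.Icc 1 t, ((t:ℝ)⁻¹ • mvec (A i) (x k i)
              + (t:ℝ)⁻¹ • mvec (B i) (y k) - (t:ℝ)⁻¹ • b i) :=
            Finset.sum_congr rfl fun k _ => by rw [smul_sub, smul_add]
        _ = (∑ k ∈ Finset.Icc 1 t, (t:ℝ)⁻¹ • mvec (A i) (x k i))
            + (∑ k ∈ Finset.Icc 1 t, (t:ℝ)⁻¹ • mvec (B i) (y k))
            - ∑ _k ∈ Finset.Icc 1 t, (t:ℝ)⁻¹ • b i := by
            rw [Finset.sum_sub_distrib, Finset.sum_add_distrib]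
        _ = (t:ℝ)⁻¹ • (∑ k ∈ Finset.Icc 1 t, mvec (A i) (x k i))
            + (t:ℝ)⁻¹ • (∑ k ∈ Finset.Icc 1 t, mvec (B i) (y k)) - b i := by
            rw [← Finset.smul_sum, ← Finset.smul_sum, Finset.sum_const, hcard]
            congr 1
            rw [← Nat.cast_smul_eq_nsmul ℝ, smul_smul, mul_inv_cancel₀ hTpos.ne', one_smul]
    rw [hvec, inner_sum]
    exact Finset.sum_congr rfl fun k _ => real_inner_smul_right _ _ _
  -- combine
  have hkey : (g (ybar t) + ∑ i, (ξ i (xbar t i) + f i (xbar t i)))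
      - (g ys + ∑ i, (ξ i (xs i) + f i (xs i)))
      + ∑ i, ⟪l i, mvec (A i) (xbar t i) + mvec (B i) (ybar t) - b i⟫
      ≤ (t:ℝ)⁻¹ * ∑ i, Φf i 0 := by
    have hsum1 : ∑ i, (ξ i (xbar t i) + f i (xbar t i))
        ≤ ∑ k ∈ Finset.Icc 1 t, (t:ℝ)⁻¹ * (∑ i, (ξ i (x k i) + f i (x k i))) := by
      calc ∑ i, (ξ i (xbar t i) + f i (xbar t i))
          ≤ ∑ i, ∑ k ∈ Finset.Icc 1 t, (t:ℝ)⁻¹ * (ξ i (x k i) + f i (x k i)) := by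
            refine Finset.sum_le_sum fun i _ => ?_
            calc ξ i (xbar t i) + f i (xbar t i)
                ≤ (∑ k ∈ Finset.Icc 1 t, (t:ℝ)⁻¹ * ξ i (x k i))
                  + ∑ k ∈ Finset.Icc 1 t, (t:ℝ)⁻¹ * f i (x k i) :=
                  add_le_add (hJξ i) (hJf i)
              _ = ∑ k ∈ Finset.Icc 1 t, (t:ℝ)⁻¹ * (ξ i (x k i) + f i (x k i)) := by
                  rw [← Finset.sum_add_distrib]
                  exact Finset.sum_congr rfl fun k _ => by ring
        _ = ∑ k ∈ Finset.Icc 1 t, ∑ i, (t:ℝ)⁻¹ * (ξ i (x k i) + f i (x k i)) :=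
            Finset.sum_comm
        _ = ∑ k ∈ Finset.Icc 1 t, (t:ℝ)⁻¹ * ∑ i, (ξ i (x k i) + f i (x k i)) :=
            Finset.sum_congr rfl fun k _ => (Finset.mul_sum _ _ _).symm
    have hsum2 : ∑ i, ⟪l i, mvec (A i) (xbar t i) + mvec (B i) (ybar t) - b i⟫
        = ∑ k ∈ Finset.Icc 1 t, (t:ℝ)⁻¹
            * ∑ i, ⟪l i, mvec (A i) (x k i) + mvec (B i) (y k) - b i⟫ := by
      calc ∑ i, ⟪l i, mvec (A i) (xbar t i) + mvec (B i) (ybar t) - b i⟫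
          = ∑ i, ∑ k ∈ Finset.Icc 1 t,
              (t:ℝ)⁻¹ * ⟪l i, mvec (A i) (x k i) + mvec (B i) (y k) - b i⟫ :=
            Finset.sum_congr rfl fun i _ => hJlin i
        _ = ∑ k ∈ Finset.Icc 1 t, ∑ i,
              (t:ℝ)⁻¹ * ⟪l i, mvec (A i) (x k i) + mvec (B i) (y k) - b i⟫ :=
            Finset.sum_comm
        _ = ∑ k ∈ Finset.Icc 1 t, (t:ℝ)⁻¹
              * ∑ i, ⟪l i, mvec (A i) (x k i) + mvec (B i) (y k) - b i⟫ :=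
            Finset.sum_congr rfl fun k _ => (Finset.mul_sum _ _ _).symm
    have hexp : ∑ k ∈ Finset.Icc 1 t, (t:ℝ)⁻¹
          * ((g (y k) + ∑ i, (ξ i (x k i) + f i (x k i)))
            - (g ys + ∑ i, (ξ i (xs i) + f i (xs i)))
            + ∑ i, ⟪l i, mvec (A i) (x k i) + mvec (B i) (y k) - b i⟫)
        = (∑ k ∈ Finset.Icc 1 t, (t:ℝ)⁻¹ * g (y k))
          + (∑ k ∈ Finset.Icc 1 t, (t:ℝ)⁻¹ * (∑ i, (ξ i (x k i) + f i (x k i))))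
          - (g ys + ∑ i, (ξ i (xs i) + f i (xs i)))
          + ∑ k ∈ Finset.Icc 1 t, (t:ℝ)⁻¹
              * ∑ i, ⟪l i, mvec (A i) (x k i) + mvec (B i) (y k) - b i⟫ := by
      rw [Finset.sum_congr rfl (fun k (_ : k ∈ Finset.Icc 1 t) => by
        ring : ∀ k ∈ Finset.Icc 1 t, (t:ℝ)⁻¹
          * ((g (y k) + ∑ i, (ξ i (x k i) + f i (x k i)))
            - (g ys + ∑ i, (ξ i (xs i) + f i (xs i)))
            + ∑ i, ⟪l i, mvec (A i) (x k i) + mvec (B i) (y k) - b i⟫)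
          = (t:ℝ)⁻¹ * g (y k) + (t:ℝ)⁻¹ * (∑ i, (ξ i (x k i) + f i (x k i)))
            - (t:ℝ)⁻¹ * (g ys + ∑ i, (ξ i (xs i) + f i (xs i)))
            + (t:ℝ)⁻¹ * ∑ i, ⟪l i, mvec (A i) (x k i) + mvec (B i) (y k) - b i⟫)]
      rw [Finset.sum_add_distrib, Finset.sum_sub_distrib, Finset.sum_add_distrib,
        ← Finset.sum_mul, hwsum, one_mul]
    have hmul : (t:ℝ)⁻¹ * (∑ k ∈ Finset.Icc 1 t,
          ((g (y k) + ∑ i, (ξ i (x k i) + f i (x k i)))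
            - (g ys + ∑ i, (ξ i (xs i) + f i (xs i)))
            + ∑ i, ⟪l i, mvec (A i) (x k i) + mvec (B i) (y k) - b i⟫))
        = ∑ k ∈ Finset.Icc 1 t, (t:ℝ)⁻¹
          * ((g (y k) + ∑ i, (ξ i (x k i) + f i (x k i)))
            - (g ys + ∑ i, (ξ i (xs i) + f i (xs i)))
            + ∑ i, ⟪l i, mvec (A i) (x k i) + mvec (B i) (y k) - b i⟫) :=
      Finset.mul_sum _ _ _
    have hfinal : (t:ℝ)⁻¹ * (∑ k ∈ Finset.Icc 1 t,
          ((g (y k) + ∑ i, (ξ i (x k i) + f i (x k i)))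
            - (g ys + ∑ i, (ξ i (xs i) + f i (xs i)))
            + ∑ i, ⟪l i, mvec (A i) (x k i) + mvec (B i) (y k) - b i⟫))
        ≤ (t:ℝ)⁻¹ * ∑ i, Φf i 0 := by
      apply mul_le_mul_of_nonneg_left _ (inv_nonneg.mpr hTpos.le)
      linarith [htel t, hΦnn t]
    rw [hmul, hexp] at hfinal
    linarith [hJg, hsum1, hsum2.le, hsum2.ge, hfinal]
  -- identify the right-hand side
  have hRHS : (2 * (t:ℝ))⁻¹ * ∑ i, ((γ i)⁻¹ * ‖l i - lam 0 i‖ ^ 2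
        + (c i)⁻¹ * qnorm (1 - (γ i * c i) • ((A i)ᵀ * A i)) (xs i - x 0 i))
      + (2 * (t:ℝ))⁻¹ * qnorm (∑ i, γ i • ((B i)ᵀ * B i)) (ys - y 0)
      = (t:ℝ)⁻¹ * ∑ i, Φf i 0 := by
    rw [PGADMMAux.qnorm_sum, Finset.mul_sum, Finset.mul_sum, Finset.mul_sum,
      ← Finset.sum_add_distrib]
    refine Finset.sum_congr rfl fun i _ => ?_
    rw [PGADMMAux.qnorm_G, PGADMMAux.qnorm_smulBtB]
    simp only [hΦf, mul_inv]
    have hγne : γ i ≠ 0 := (hγ i).ne'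
    have hcne : c i ≠ 0 := (hcpos i).ne'
    have htne : (t:ℝ) ≠ 0 := hTpos.ne'
    field_simp
  rw [hRHS]
  exact hkey
end

section
/- Let G = {g(1),…,g(K)} be a partition of {1,…,n}, β₁, β₂ > 0, and define ξ(x) = β₁‖x‖₁ + β₂ Σ_{k=1}^K ‖x_{g(k)}‖₂ for x ∈ ℝ^n. Then for every t > 0 and x̄ ∈ ℝ^n, the proximal point x^p = prox_{tξ}(x̄) := argmin_y { ξ(y) + (1/(2t))‖y − x̄‖² } is given blockwise by x^p_{g(k)} = η'_{g(k)} · max{ 1 − tβ₂/‖η'_{g(k)}‖₂, 0 } for k = 1,…,K (interpreting the block as 0 when η'_{g(k)} = 0), where η' ∈ ℝ^n is the componentwise soft-threshold η'_j = sign(x̄_j) · max{ |x̄_j| − tβ₁, 0 }. -/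
open Finset

/-- Cauchy–Schwarz for finite sums, sqrt form. -/
lemma cs_sqrt {ι : Type*} (s : Finset ι) (f g : ι → ℝ) :
    ∑ i ∈ s, f i * g i ≤ Real.sqrt (∑ i ∈ s, f i ^ 2) * Real.sqrt (∑ i ∈ s, g i ^ 2) := by
  have h := Finset.sum_mul_sq_le_sq_mul_sq s f g
  have h2 : |∑ i ∈ s, f i * g i| ≤ Real.sqrt ((∑ i ∈ s, f i ^ 2) * ∑ i ∈ s, g i ^ 2) := by
    rw [← Real.sqrt_sq_eq_abs]
    exact Real.sqrt_le_sqrt h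
  calc ∑ i ∈ s, f i * g i ≤ |∑ i ∈ s, f i * g i| := le_abs_self _
    _ ≤ Real.sqrt ((∑ i ∈ s, f i ^ 2) * ∑ i ∈ s, g i ^ 2) := h2
    _ = _ := Real.sqrt_mul (Finset.sum_nonneg fun i _ => sq_nonneg _) _

/-- Lemma `lem:prox`: closed-form proximal map of
`ξ(x) = β₁‖x‖₁ + β₂ Σ_k ‖x_{g(k)}‖₂` for a partition `{g(k)}` of the coordinates.
The point `x^p` defined blockwise by group-soft-thresholding the componentwise
soft-threshold `η'` of `x̄` is the (unique) minimizer of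
`z ↦ ξ(z) + (1/(2t))‖z − x̄‖²`. -/
theorem prox_l1_plus_group_norm
    {n K : ℕ} (gp : Fin K → Finset (Fin n))
    (hcover : ∀ j : Fin n, ∃ k, j ∈ gp k)
    (hdisj : ∀ k k', k ≠ k' → Disjoint (gp k) (gp k'))
    (β₁ β₂ t : ℝ) (hβ₁ : 0 < β₁) (hβ₂ : 0 < β₂) (ht : 0 < t)
    (xb η xp : EuclideanSpace ℝ (Fin n))
    -- η' is the componentwise soft-threshold of x̄
    (hη : ∀ j, η j = Real.sign (xb j) * max (|xb j| - t * β₁) 0)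
    -- x^p is the blockwise group shrinkage of η'
    (hxp : ∀ k, ∀ j ∈ gp k,
      xp j = η j * max (1 - t * β₂ / Real.sqrt (∑ l ∈ gp k, (η l) ^ 2)) 0) :
    -- x^p minimizes z ↦ ξ(z) + ‖z − x̄‖²/(2t), and is the unique such minimizer
    (∀ z : EuclideanSpace ℝ (Fin n),
      β₁ * ∑ j, |xp j| + β₂ * ∑ k, Real.sqrt (∑ l ∈ gp k, (xp l) ^ 2)
        + (2 * t)⁻¹ * ‖xp - xb‖ ^ 2
      ≤ β₁ * ∑ j, |z j| + β₂ * ∑ k, Real.sqrt (∑ l ∈ gp k, (z l) ^ 2)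
        + (2 * t)⁻¹ * ‖z - xb‖ ^ 2)
    ∧ (∀ q : EuclideanSpace ℝ (Fin n),
      (∀ z : EuclideanSpace ℝ (Fin n),
        β₁ * ∑ j, |q j| + β₂ * ∑ k, Real.sqrt (∑ l ∈ gp k, (q l) ^ 2)
          + (2 * t)⁻¹ * ‖q - xb‖ ^ 2
        ≤ β₁ * ∑ j, |z j| + β₂ * ∑ k, Real.sqrt (∑ l ∈ gp k, (z l) ^ 2)
          + (2 * t)⁻¹ * ‖z - xb‖ ^ 2) → q = xp) := by
  classical
  have ht' : t ≠ 0 := ht.ne'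
  have htβ₁ : 0 < t * β₁ := mul_pos ht hβ₁
  have htβ₂ : 0 < t * β₂ := mul_pos ht hβ₂
  -- the two subgradient vectors
  set u : Fin n → ℝ := fun j => (xb j - η j) / (t * β₁) with hu_def
  set v : Fin n → ℝ := fun j => (η j - xp j) / (t * β₂) with hv_def
  -- sign structure of η
  have hsign : ∀ j, (|xb j| ≤ t * β₁ → η j = 0) ∧
      (t * β₁ < |xb j| → η j = xb j - t * β₁ * Real.sign (xb j) ∧ u j = Real.sign (xb j)) := by
    intro j
    constructor
    · intro h
      rw [hη j, max_eq_right (by linarith), mul_zero]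
    · intro h
      have hx0 : xb j ≠ 0 := by
        intro h0; rw [h0] at h; simp at h; linarith
      have hmax : max (|xb j| - t * β₁) 0 = |xb j| - t * β₁ := max_eq_left (by linarith)
      have hsx : Real.sign (xb j) * |xb j| = xb j := by
        rcases lt_trichotomy (xb j) 0 with hc | hc | hc
        · rw [Real.sign_of_neg hc, abs_of_neg hc]; ring
        · exact absurd hc hx0
        · rw [Real.sign_of_pos hc, abs_of_pos hc]; ring
      have hηj : η j = xb j - t * β₁ * Real.sign (xb j) := by
        rw [hη j, hmax, mul_sub, hsx]; ring
      refine ⟨hηj, ?_⟩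
      rw [hu_def]
      simp only
      rw [hηj]
      field_simp
      ring
  -- facts about u
  have hu_abs : ∀ j, |u j| ≤ 1 := by
    intro j
    rcases le_or_gt (|xb j|) (t * β₁) with h | h
    · have hη0 := (hsign j).1 h
      rw [hu_def]; simp only [hη0, sub_zero, abs_div, abs_of_pos htβ₁]
      rw [div_le_one htβ₁]; exact h
    · rw [((hsign j).2 h).2]
      rcases lt_trichotomy (xb j) 0 with hc | hc | hc
      · rw [Real.sign_of_neg hc]; norm_num
      · simp [hc]
      · rw [Real.sign_of_pos hc]; norm_num
  have hu_xp : ∀ j, u j * xp j = |xp j| := by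
    intro j
    obtain ⟨k, hk⟩ := hcover j
    set c : ℝ := max (1 - t * β₂ / Real.sqrt (∑ l ∈ gp k, (η l) ^ 2)) 0 with hc_def
    have hc0 : 0 ≤ c := le_max_right _ _
    have hxpj : xp j = η j * c := hxp k j hk
    rcases le_or_gt (|xb j|) (t * β₁) with h | h
    · have hη0 := (hsign j).1 h
      rw [hxpj, hη0, zero_mul, mul_zero, abs_zero]
    · obtain ⟨hηj, huj⟩ := (hsign j).2 h
      rw [huj, hxpj, hηj]
      rcases lt_trichotomy (xb j) 0 with hcc | hcc | hcc
      · rw [Real.sign_of_neg hcc, abs_of_neg hcc] at *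
        have hneg : xb j - t * β₁ * (-1) ≤ 0 := by linarith
        rw [abs_of_nonpos (mul_nonpos_of_nonpos_of_nonneg hneg hc0)]
        ring
      · exfalso; rw [hcc] at h; simp at h; linarith
      · rw [Real.sign_of_pos hcc, abs_of_pos hcc] at *
        have hpos : 0 ≤ xb j - t * β₁ * 1 := by linarith
        rw [abs_of_nonneg (mul_nonneg hpos hc0)]
        ring
  have hu_z : ∀ j (w : ℝ), u j * w ≤ |w| := by
    intro j w
    calc u j * w ≤ |u j * w| := le_abs_self _
      _ = |u j| * |w| := abs_mul _ _
      _ ≤ 1 * |w| := mul_le_mul_of_nonneg_right (hu_abs j) (abs_nonneg _)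
      _ = |w| := one_mul _
  -- facts about v, blockwise
  have hblock : ∀ k, (∑ l ∈ gp k, v l * xp l = Real.sqrt (∑ l ∈ gp k, (xp l) ^ 2)) ∧
      (∀ z : EuclideanSpace ℝ (Fin n),
        ∑ l ∈ gp k, v l * z l ≤ Real.sqrt (∑ l ∈ gp k, (z l) ^ 2)) := by
    intro k
    set S : ℝ := ∑ l ∈ gp k, (η l) ^ 2 with hS_def
    have hS0 : 0 ≤ S := Finset.sum_nonneg fun l _ => sq_nonneg _
    set s : ℝ := Real.sqrt S with hs_def
    have hs0 : 0 ≤ s := Real.sqrt_nonneg _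
    have hs2 : s ^ 2 = S := Real.sq_sqrt hS0
    set c : ℝ := max (1 - t * β₂ / s) 0 with hc_def
    have hc0 : 0 ≤ c := le_max_right _ _
    have hxpk : ∀ l ∈ gp k, xp l = η l * c := fun l hl => hxp k l hl
    have hvk : ∀ l ∈ gp k, v l = η l * ((1 - c) / (t * β₂)) := by
      intro l hl
      rw [hv_def]; simp only
      rw [hxpk l hl]; ring
    -- key computations, by cases
    have hvsq : ∑ l ∈ gp k, (v l) ^ 2 ≤ 1 ∧
        ∑ l ∈ gp k, v l * xp l = Real.sqrt (∑ l ∈ gp k, (xp l) ^ 2) := by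
      have hsum_v : ∑ l ∈ gp k, (v l) ^ 2 = ((1 - c) / (t * β₂)) ^ 2 * S := by
        rw [hS_def, Finset.mul_sum]
        refine Finset.sum_congr rfl fun l hl => ?_
        rw [hvk l hl]; ring
      have hsum_vxp : ∑ l ∈ gp k, v l * xp l = (1 - c) / (t * β₂) * c * S := by
        rw [hS_def, Finset.mul_sum]
        refine Finset.sum_congr rfl fun l hl => ?_
        rw [hvk l hl, hxpk l hl]; ring
      have hsum_xp : ∑ l ∈ gp k, (xp l) ^ 2 = c ^ 2 * S := by
        rw [hS_def, Finset.mul_sum]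
        refine Finset.sum_congr rfl fun l hl => ?_
        rw [hxpk l hl]; ring
      have hsqrt_xp : Real.sqrt (∑ l ∈ gp k, (xp l) ^ 2) = c * s := by
        rw [hsum_xp, ← hs2]
        rw [show c ^ 2 * s ^ 2 = (c * s) ^ 2 by ring]
        exact Real.sqrt_sq (mul_nonneg hc0 hs0)
      rcases eq_or_lt_of_le hS0 with hSz | hSpos
      · -- S = 0
        have hsz : s = 0 := by rw [hs_def, ← hSz, Real.sqrt_zero]
        constructor
        · rw [hsum_v, ← hSz, mul_zero]; norm_num
        · rw [hsum_vxp, hsqrt_xp, ← hSz, hsz]; ring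
      · have hspos : 0 < s := Real.sqrt_pos.mpr hSpos
        rcases le_or_gt s (t * β₂) with hcase | hcase
        · -- c = 0
          have hcz : c = 0 := by
            rw [hc_def]
            apply max_eq_right
            have : 1 ≤ t * β₂ / s := (one_le_div hspos).mpr hcase
            linarith
          constructor
          · rw [hsum_v, hcz]
            have : S ≤ (t * β₂) ^ 2 := by nlinarith
            rw [div_pow]
            rw [div_mul_eq_mul_div, div_le_one (by positivity)]
            nlinarith
          · rw [hsum_vxp, hsqrt_xp, hcz]; ring
        · -- c = 1 - tβ₂/s > 0
          have hcpos : (0:ℝ) < 1 - t * β₂ / s := by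
            rw [sub_pos, div_lt_one hspos]; exact hcase
          have hcv : c = 1 - t * β₂ / s := max_eq_left hcpos.le
          have h1c : 1 - c = t * β₂ / s := by rw [hcv]; ring
          constructor
          · rw [hsum_v, h1c]
            have h1s : (t * β₂ / s / (t * β₂)) = 1 / s := by
              field_simp
            rw [h1s, div_pow, one_pow, div_mul_eq_mul_div, one_mul, ← hs2,
              div_le_one (by positivity)]
          · rw [hsum_vxp, hsqrt_xp, h1c]
            have h1s : t * β₂ / s / (t * β₂) = 1 / s := by
              field_simp
            rw [h1s, ← hs2]
            field_simp
    refine ⟨hvsq.2, ?_⟩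
    intro z
    have hCS := cs_sqrt (gp k) v (fun l => z l)
    have hle1 : Real.sqrt (∑ l ∈ gp k, (v l) ^ 2) ≤ 1 := by
      rw [show (1:ℝ) = Real.sqrt 1 by rw [Real.sqrt_one]]
      exact Real.sqrt_le_sqrt hvsq.1
    calc ∑ l ∈ gp k, v l * z l
        ≤ Real.sqrt (∑ l ∈ gp k, (v l) ^ 2) * Real.sqrt (∑ l ∈ gp k, (z l) ^ 2) := hCS
      _ ≤ 1 * Real.sqrt (∑ l ∈ gp k, (z l) ^ 2) :=
          mul_le_mul_of_nonneg_right hle1 (Real.sqrt_nonneg _)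
      _ = _ := one_mul _
  -- partition summation
  have hpart : ∀ f : Fin n → ℝ, ∑ k, ∑ l ∈ gp k, f l = ∑ j, f j := by
    intro f
    set b : Fin n → Fin K := fun j => (hcover j).choose with hb_def
    have hb : ∀ j, j ∈ gp (b j) := fun j => (hcover j).choose_spec
    have hgp_eq : ∀ k, gp k = Finset.univ.filter (fun j => b j = k) := by
      intro k
      ext j
      simp only [Finset.mem_filter, Finset.mem_univ, true_and]
      constructor
      · intro hj
        by_contra hne
        exact (Finset.disjoint_left.mp (hdisj (b j) k hne) (hb j)) hj
      · intro hbj; rw [← hbj]; exact hb j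
    calc ∑ k, ∑ l ∈ gp k, f l
        = ∑ k, ∑ l ∈ Finset.univ.filter (fun j => b j = k), f l := by
          refine Finset.sum_congr rfl fun k _ => ?_; rw [hgp_eq k]
      _ = ∑ j, f j := Finset.sum_fiberwise _ _ _
  -- norm squared in coordinates
  have hnorm : ∀ w : EuclideanSpace ℝ (Fin n), ‖w - xb‖ ^ 2 = ∑ j, (w j - xb j) ^ 2 := by
    intro w
    have h1 : ‖w - xb‖ = Real.sqrt (∑ j, (w j - xb j) ^ 2) := by
      rw [EuclideanSpace.norm_eq]
      congr 1
      refine Finset.sum_congr rfl fun j _ => ?_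
      have : (w - xb) j = w j - xb j := rfl
      rw [this, Real.norm_eq_abs, sq_abs]
    rw [h1, Real.sq_sqrt (Finset.sum_nonneg fun j _ => sq_nonneg _)]
  -- stationarity
  have hzero : ∀ j, β₁ * u j + β₂ * v j + t⁻¹ * (xp j - xb j) = 0 := by
    intro j
    rw [hu_def, hv_def]; simp only
    field_simp
    ring
  -- key strong inequality
  have key : ∀ z : EuclideanSpace ℝ (Fin n),
      (β₁ * ∑ j, |xp j| + β₂ * ∑ k, Real.sqrt (∑ l ∈ gp k, (xp l) ^ 2)
        + (2 * t)⁻¹ * ‖xp - xb‖ ^ 2) + (2 * t)⁻¹ * ∑ j, (z j - xp j) ^ 2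
      ≤ β₁ * ∑ j, |z j| + β₂ * ∑ k, Real.sqrt (∑ l ∈ gp k, (z l) ^ 2)
        + (2 * t)⁻¹ * ‖z - xb‖ ^ 2 := by
    intro z
    have hA : ∑ j, u j * (z j - xp j) ≤ (∑ j, |z j|) - ∑ j, |xp j| := by
      rw [← Finset.sum_sub_distrib]
      refine Finset.sum_le_sum fun j _ => ?_
      have h1 := hu_z j (z j)
      have h2 := hu_xp j
      nlinarith [h1, h2]
    have hB : ∑ j, v j * (z j - xp j)
        ≤ (∑ k, Real.sqrt (∑ l ∈ gp k, (z l) ^ 2))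
          - ∑ k, Real.sqrt (∑ l ∈ gp k, (xp l) ^ 2) := by
      rw [← hpart (fun j => v j * (z j - xp j)), ← Finset.sum_sub_distrib]
      refine Finset.sum_le_sum fun k _ => ?_
      obtain ⟨h1, h2⟩ := hblock k
      have h3 := h2 z
      have : ∑ l ∈ gp k, v l * (z l - xp l)
          = (∑ l ∈ gp k, v l * z l) - ∑ l ∈ gp k, v l * xp l := by
        rw [← Finset.sum_sub_distrib]
        exact Finset.sum_congr rfl fun l _ => by ring
      rw [this, h1]
      linarith
    have hC : ∑ j, (z j - xb j) ^ 2
        = (∑ j, (xp j - xb j) ^ 2) + (∑ j, (z j - xp j) ^ 2)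
          + 2 * ∑ j, (xp j - xb j) * (z j - xp j) := by
      rw [Finset.mul_sum, ← Finset.sum_add_distrib, ← Finset.sum_add_distrib]
      exact Finset.sum_congr rfl fun j _ => by ring
    have hsum0 : β₁ * (∑ j, u j * (z j - xp j)) + β₂ * (∑ j, v j * (z j - xp j))
        + t⁻¹ * (∑ j, (xp j - xb j) * (z j - xp j)) = 0 := by
      rw [Finset.mul_sum, Finset.mul_sum, Finset.mul_sum, ← Finset.sum_add_distrib,
        ← Finset.sum_add_distrib]
      refine Finset.sum_eq_zero fun j _ => ?_
      have h := hzero j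
      have hr : β₁ * (u j * (z j - xp j)) + β₂ * (v j * (z j - xp j))
          + t⁻¹ * ((xp j - xb j) * (z j - xp j))
          = (β₁ * u j + β₂ * v j + t⁻¹ * (xp j - xb j)) * (z j - xp j) := by ring
      rw [hr, h, zero_mul]
    have hA' : β₁ * (∑ j, u j * (z j - xp j)) ≤ β₁ * ((∑ j, |z j|) - ∑ j, |xp j|) :=
      mul_le_mul_of_nonneg_left hA hβ₁.le
    have hB' : β₂ * (∑ j, v j * (z j - xp j))
        ≤ β₂ * ((∑ k, Real.sqrt (∑ l ∈ gp k, (z l) ^ 2))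
          - ∑ k, Real.sqrt (∑ l ∈ gp k, (xp l) ^ 2)) :=
      mul_le_mul_of_nonneg_left hB hβ₂.le
    rw [hnorm z, hnorm xp, hC]
    have h2t : (0:ℝ) < (2 * t)⁻¹ := by positivity
    have hexp : (2 * t)⁻¹ * ((∑ j, (xp j - xb j) ^ 2) + (∑ j, (z j - xp j) ^ 2)
          + 2 * ∑ j, (xp j - xb j) * (z j - xp j))
        = (2 * t)⁻¹ * (∑ j, (xp j - xb j) ^ 2) + (2 * t)⁻¹ * (∑ j, (z j - xp j) ^ 2)
          + t⁻¹ * ∑ j, (xp j - xb j) * (z j - xp j) := by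
      field_simp
    rw [hexp]
    linarith [hA', hB', hsum0]
  have hmin : ∀ z : EuclideanSpace ℝ (Fin n),
      β₁ * ∑ j, |xp j| + β₂ * ∑ k, Real.sqrt (∑ l ∈ gp k, (xp l) ^ 2)
        + (2 * t)⁻¹ * ‖xp - xb‖ ^ 2
      ≤ β₁ * ∑ j, |z j| + β₂ * ∑ k, Real.sqrt (∑ l ∈ gp k, (z l) ^ 2)
        + (2 * t)⁻¹ * ‖z - xb‖ ^ 2 := by
    intro z
    have h := key z
    have hpos : 0 ≤ (2 * t)⁻¹ * ∑ j, (z j - xp j) ^ 2 := by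
      have : (0:ℝ) ≤ ∑ j, (z j - xp j) ^ 2 := Finset.sum_nonneg fun j _ => sq_nonneg _
      positivity
    linarith
  refine ⟨hmin, ?_⟩
  intro q hq
  have h1 := hq xp
  have h2 := key q
  have h3 : (2 * t)⁻¹ * ∑ j, (q j - xp j) ^ 2 ≤ 0 := by linarith
  have h2t : (0:ℝ) < (2 * t)⁻¹ := by positivity
  have h4 : ∑ j, (q j - xp j) ^ 2 ≤ 0 := by
    by_contra hcon
    push_neg at hcon
    nlinarith
  have h5 : ∑ j, (q j - xp j) ^ 2 = 0 :=
    le_antisymm h4 (Finset.sum_nonneg fun j _ => sq_nonneg _)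
  have h6 : ∀ j ∈ Finset.univ, (q j - xp j) ^ 2 = 0 :=
    (Finset.sum_eq_zero_iff_of_nonneg fun j _ => sq_nonneg _).mp h5
  ext j
  have := h6 j (Finset.mem_univ j)
  have := pow_eq_zero_iff (n := 2) (by norm_num) |>.mp this
  linarith [this]
end

section
/- Let ξ : ℝ^{n_x} → ℝ ∪ {+∞} be proper, closed and convex, f : ℝ^{n_x} → ℝ convex and differentiable with L-Lipschitz gradient, g : ℝ^{n_y} → ℝ ∪ {+∞} proper, closed and convex, A ∈ ℝ^{n_y×n_x}, and c, γ > 0. Consider the PG-ADMM iterations for min_{x,y} { ξ(x) + f(x) + g(y) : Ax − y = 0 }: x^{k+1} = prox_{cξ}( x^k − c[∇f(x^k) + Aᵀ(λ^k + γ(Ax^k − y^k))] ), y^{k+1} = argmin_y { g(y) + (γ/2)‖Ax^{k+1} − y + λ^k/γ‖² }, λ^{k+1} = λ^k + γ(Ax^{k+1} − y^{k+1}). Then for every k: (i) y^{k+1} = Ax^{k+1} + λ^k/γ − (1/γ) prox_{γg*}(λ^k + γAx^{k+1}) and λ^{k+1} = prox_{γg*}(λ^k + γAx^{k+1}), where g*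 is the Fenchel conjugate of g; and (ii) for k ≥ 1, the x-update can be written as x^{k+1} = prox_{cξ}( x^k − c[∇f(x^k) + Aᵀ(2λ^k − λ^{k−1})] ), so PG-ADMM on this problem coincides with the primal–dual iteration x^{k+1} = prox_{cξ}(x^k − c[∇f(x^k) + Aᵀ(2λ^k − λ^{k−1})]), λ^{k+1} = prox_{γg*}(λ^k + γAx^{k+1}). -/
open Finset Matrix
open scoped RealInnerProductSpace

set_option maxHeartbeats 1600000 in
/-- Section "Connections to the existing work": PG-ADMM applied to
`min { ξ(x) + f(x) + g(y) : Ax − y = 0 }` coincides with the Condat–Chambolle–Pock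
primal–dual iteration.  Extended-real-valued proper closed convex `ξ` and `g` are
modelled as real-valued convex functions on their (closed, nonempty, convex) effective
domains; the Fenchel conjugate `g*` is modelled by its real value
`g*(λ) = sup_{y ∈ dom g}(⟨λ,y⟩ − g(y))` on its effective domain
`dom g* = {λ | the sup is finite}`, and `prox` is characterized as the minimizer of the
corresponding Moreau envelope objective. -/
theorem pg_admm_is_primal_dual
    {nx ny : ℕ}
    (A : Matrix (Fin ny) (Fin nx) ℝ)
    (ξ : EuclideanSpace ℝ (Fin nx) → ℝ) (domξ : Set (EuclideanSpace ℝ (Fin nx)))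
    (f : EuclideanSpace ℝ (Fin nx) → ℝ)
    (f' : EuclideanSpace ℝ (Fin nx) → EuclideanSpace ℝ (Fin nx))
    (L : ℝ)
    (g : EuclideanSpace ℝ (Fin ny) → ℝ) (domg : Set (EuclideanSpace ℝ (Fin ny)))
    (c γ : ℝ)
    (x : ℕ → EuclideanSpace ℝ (Fin nx))
    (y : ℕ → EuclideanSpace ℝ (Fin ny))
    (lam : ℕ → EuclideanSpace ℝ (Fin ny))
    -- ξ proper closed convex
    (hξconv : ConvexOn ℝ domξ ξ)
    (hξlsc : LowerSemicontinuousOn ξ domξ)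
    (hξcl : IsClosed domξ) (hξne : domξ.Nonempty)
    -- f convex with L-Lipschitz gradient
    (hfconv : ConvexOn ℝ Set.univ f)
    (hfgrad : ∀ z, HasGradientAt f (f' z) z)
    (hfLip : ∀ z w, ‖f' z - f' w‖ ≤ L * ‖z - w‖)
    -- g proper closed convex
    (hgconv : ConvexOn ℝ domg g)
    (hglsc : LowerSemicontinuousOn g domg)
    (hgcl : IsClosed domg) (hgne : domg.Nonempty)
    -- positive parameters
    (hcpos : 0 < c) (hγpos : 0 < γ)
    -- PG-ADMM x-update
    (hxup : ∀ k, x (k+1) ∈ domξ ∧ ∀ z ∈ domξ,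
      ξ (x (k+1)) + (2 * c)⁻¹ *
        ‖x (k+1) - (x k - c • (f' (x k) + mvec Aᵀ (lam k + γ • (mvec A (x k) - y k))))‖ ^ 2
      ≤ ξ z + (2 * c)⁻¹ *
        ‖z - (x k - c • (f' (x k) + mvec Aᵀ (lam k + γ • (mvec A (x k) - y k))))‖ ^ 2)
    -- PG-ADMM y-update
    (hyup : ∀ k, y (k+1) ∈ domg ∧ ∀ z ∈ domg,
      g (y (k+1)) + γ / 2 * ‖mvec A (x (k+1)) - y (k+1) + γ⁻¹ • lam k‖ ^ 2
      ≤ g z + γ / 2 * ‖mvec A (x (k+1)) - z + γ⁻¹ • lam k‖ ^ 2)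
    -- PG-ADMM dual update
    (hlamup : ∀ k, lam (k+1) = lam k + γ • (mvec A (x (k+1)) - y (k+1))) :
    -- (i) the y- and λ-updates are a Moreau decomposition through prox_{γ g*}
    (∀ k,
      (lam (k+1) ∈ {l | BddAbove ((fun w => ⟪l, w⟫ - g w) '' domg)} ∧
        ∀ z ∈ {l | BddAbove ((fun w => ⟪l, w⟫ - g w) '' domg)},
          sSup ((fun w => ⟪lam (k+1), w⟫ - g w) '' domg)
            + (2 * γ)⁻¹ * ‖lam (k+1) - (lam k + γ • mvec A (x (k+1)))‖ ^ 2
          ≤ sSup ((fun w => ⟪z, w⟫ - g w) '' domg)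
            + (2 * γ)⁻¹ * ‖z - (lam k + γ • mvec A (x (k+1)))‖ ^ 2)
      ∧ y (k+1) = mvec A (x (k+1)) + γ⁻¹ • lam k - γ⁻¹ • lam (k+1))
    ∧
    -- (ii) for k ≥ 1 the x-update can be written in primal–dual form
    (∀ k : ℕ, 1 ≤ k →
      ∀ z ∈ domξ,
        ξ (x (k+1)) + (2 * c)⁻¹ *
          ‖x (k+1) - (x k - c • (f' (x k)
            + mvec Aᵀ ((2:ℝ) • lam k - lam (k-1))))‖ ^ 2
        ≤ ξ z + (2 * c)⁻¹ *
          ‖z - (x k - c • (f' (x k)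
            + mvec Aᵀ ((2:ℝ) • lam k - lam (k-1))))‖ ^ 2) := by

  constructor
  · -- part (i)
    intro k
    obtain ⟨hwmem, hwmin⟩ := hyup k
    have hμ : lam (k+1) = lam k + γ • (mvec A (x (k+1)) - y (k+1)) := hlamup k
    have hγne : γ ≠ 0 := hγpos.ne'
    -- the y equation
    have hyeq : y (k+1) = mvec A (x (k+1)) + γ⁻¹ • lam k - γ⁻¹ • lam (k+1) := by
      rw [hμ, smul_add, smul_smul, inv_mul_cancel₀ hγne, one_smul]
      module
    -- subgradient inequality : lam (k+1) ∈ ∂g(y (k+1))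
    have hsub : ∀ z ∈ domg,
        ⟪lam (k+1), z⟫ - g z ≤ ⟪lam (k+1), y (k+1)⟫ - g (y (k+1)) := by
      intro z hz
      have key : ⟪lam (k+1), z - y (k+1)⟫ ≤ g z - g (y (k+1)) := by
        refine le_of_forall_pos_le_add fun ε hε => ?_
        set X : ℝ := ‖z - y (k+1)‖ ^ 2 with hX
        have hXnn : 0 ≤ X := by positivity
        have hden : 0 < γ / 2 * (X + 1) := by positivity
        set t : ℝ := min 1 (ε / (γ / 2 * (X + 1))) with ht
        have ht0 : 0 < t := lt_min one_pos (div_pos hε hden)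
        have ht1 : t ≤ 1 := min_le_left _ _
        have htε : t * (γ / 2 * (X + 1)) ≤ ε :=
          (le_div_iff₀ hden).mp (min_le_right _ _)
        -- the convex combination point
        have hztmem : (1 - t) • y (k+1) + t • z ∈ domg :=
          hgconv.1 hwmem hz (by linarith) ht0.le (by ring)
        have hconv := hgconv.2 hwmem hz (by linarith : (0:ℝ) ≤ 1 - t) ht0.le (by ring)
        simp only [smul_eq_mul] at hconv
        have hmin := hwmin _ hztmem
        set d := mvec A (x (k+1)) - y (k+1) + γ⁻¹ • lam k with hd
        have hvec : mvec A (x (k+1)) - ((1 - t) • y (k+1) + t • z) + γ⁻¹ • lam k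
            = d - t • (z - y (k+1)) := by rw [hd]; module
        have hN : ‖mvec A (x (k+1)) - ((1 - t) • y (k+1) + t • z) + γ⁻¹ • lam k‖ ^ 2
            = ‖d‖ ^ 2 - 2 * (t * ⟪d, z - y (k+1)⟫) + t ^ 2 * X := by
          rw [hvec, norm_sub_sq_real, real_inner_smul_right, norm_smul,
            Real.norm_eq_abs, abs_of_pos ht0, hX, mul_pow]
        rw [hN] at hmin
        -- identify lam (k+1) = γ • d
        have hμd : lam (k+1) = γ • d := by
          rw [hμ, hd, smul_add, smul_smul, mul_inv_cancel₀ hγne, one_smul]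
          module
        have hinner : ⟪lam (k+1), z - y (k+1)⟫ = γ * ⟪d, z - y (k+1)⟫ := by
          rw [hμd, real_inner_smul_left]
        -- divide through by t
        have h1 : t * (γ * ⟪d, z - y (k+1)⟫ - γ * t / 2 * X)
            ≤ t * (g z - g (y (k+1))) := by nlinarith [hmin, hconv]
        have h2 : γ * ⟪d, z - y (k+1)⟫ - γ * t / 2 * X ≤ g z - g (y (k+1)) :=
          le_of_mul_le_mul_left h1 ht0
        have h3 : γ * t / 2 * X ≤ ε := by nlinarith [ht0.le, hγpos.le]
        rw [hinner]
        linarith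
      rw [inner_sub_right] at key
      linarith
    -- boundedness and value of the sup
    have hbdd : BddAbove ((fun w => ⟪lam (k+1), w⟫ - g w) '' domg) := by
      refine ⟨⟪lam (k+1), y (k+1)⟫ - g (y (k+1)), ?_⟩
      rintro r ⟨z, hz, rfl⟩
      exact hsub z hz
    have hSup : sSup ((fun w => ⟪lam (k+1), w⟫ - g w) '' domg)
        = ⟪lam (k+1), y (k+1)⟫ - g (y (k+1)) := by
      refine le_antisymm (csSup_le (hgne.image _) ?_) (le_csSup hbdd ⟨y (k+1), hwmem, rfl⟩)
      rintro r ⟨z, hz, rfl⟩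
      exact hsub z hz
    refine ⟨⟨hbdd, ?_⟩, hyeq⟩
    intro l hl
    have hl' : BddAbove ((fun w => ⟪l, w⟫ - g w) '' domg) := hl
    have hlw : ⟪l, y (k+1)⟫ - g (y (k+1))
        ≤ sSup ((fun w => ⟪l, w⟫ - g w) '' domg) :=
      le_csSup hl' ⟨y (k+1), hwmem, rfl⟩
    rw [hSup]
    have hs : lam k + γ • mvec A (x (k+1)) = lam (k+1) + γ • y (k+1) := by
      rw [hμ]; module
    rw [hs]
    have e1 : ‖lam (k+1) - (lam (k+1) + γ • y (k+1))‖ ^ 2 = γ ^ 2 * ‖y (k+1)‖ ^ 2 := by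
      have : lam (k+1) - (lam (k+1) + γ • y (k+1)) = -(γ • y (k+1)) := by module
      rw [this, norm_neg, norm_smul, Real.norm_eq_abs, abs_of_pos hγpos, mul_pow]
    have e2 : ‖l - (lam (k+1) + γ • y (k+1))‖ ^ 2
        = ‖l - lam (k+1)‖ ^ 2 - 2 * (γ * ⟪l - lam (k+1), y (k+1)⟫)
          + γ ^ 2 * ‖y (k+1)‖ ^ 2 := by
      have : l - (lam (k+1) + γ • y (k+1)) = (l - lam (k+1)) - γ • y (k+1) := by module
      rw [this, norm_sub_sq_real, real_inner_smul_right, norm_smul,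
        Real.norm_eq_abs, abs_of_pos hγpos, mul_pow]
    rw [e1, e2, inner_sub_left]
    have h2γ : (0:ℝ) < (2 * γ)⁻¹ := by positivity
    have hnn : (0:ℝ) ≤ ‖l - lam (k+1)‖ ^ 2 := by positivity
    have key2 : (2 * γ)⁻¹ * (‖l - lam (k+1)‖ ^ 2
          - 2 * (γ * (⟪l, y (k+1)⟫ - ⟪lam (k+1), y (k+1)⟫))
          + γ ^ 2 * ‖y (k+1)‖ ^ 2)
        = (2 * γ)⁻¹ * ‖l - lam (k+1)‖ ^ 2
          - (⟪l, y (k+1)⟫ - ⟪lam (k+1), y (k+1)⟫)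
          + (2 * γ)⁻¹ * (γ ^ 2 * ‖y (k+1)‖ ^ 2) := by
      field_simp
    rw [key2]
    linarith [mul_nonneg h2γ.le hnn, hlw]
  · -- part (ii)
    intro k hk z hz
    obtain ⟨m, rfl⟩ : ∃ m, k = m + 1 := ⟨k - 1, (Nat.succ_pred_eq_of_pos hk).symm⟩
    have hstep : γ • (mvec A (x (m+1)) - y (m+1)) = lam (m+1) - lam m := by
      rw [hlamup m]; module
    have key : (2:ℝ) • lam (m+1) - lam (m+1-1)
        = lam (m+1) + γ • (mvec A (x (m+1)) - y (m+1)) := by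
      rw [hstep]
      simp only [Nat.add_sub_cancel]
      module
    rw [key]
    exact (hxup (m+1)).2 z hz
end
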